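/- arXiv:2103.07705 — 7 statements merged into one kernel-verified Lean document; each statement's English description precedes it below -/
import Mathlib

section
/- If G is a unicyclic graph with n ≥ 4 vertices, then 4^n ≤ NK*(G) ≤ 16·(n-1)^{n-1}, where NK*(G) = Π_{u ∈ V(G)} d_u^{d_u}. The lower bound is attained if and only if G = C_n and the upper bound if and only if G = U_n^3. -/
open Finset SimpleGraph

/-- A unicyclic graph: connected with as many edges as vertices. -/
def IsUnicyclic {n : ℕ} (G : SimpleGraph (Fin n)) [DecidableRel G.Adj] : Prop :=
  G.Connected ∧ G.edgeFinset.card = n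

/-- The graph `U_n^3`: a triangle on vertices 0,1,2 with n-3 pendant edges attached to 0. -/
def unicyclicStar (n : ℕ) : SimpleGraph (Fin n) :=
  SimpleGraph.fromRel (fun i j => i.val = 0 ∨ (i.val = 1 ∧ j.val = 2))

set_option maxHeartbeats 1000000

instance instDecStar (n : ℕ) : DecidableRel (unicyclicStar n).Adj := fun a b =>
  decidable_of_iff _ (SimpleGraph.fromRel_adj _ a b).symm


lemma aux_four_pow_le : ∀ d : ℕ, 4^(d-1) ≤ d^d := by
  intro d
  induction d with
  | zero => simp
  | succ k ih =>
    rcases Nat.lt_or_ge k 3 with h | h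
    · interval_cases k <;> norm_num
    · have hk1 : k - 1 + 1 = k := by omega
      have h1 : (4:ℕ)^(k+1-1) = 4^(k-1) * 4 := by
        rw [← pow_succ, hk1]; simp
      rw [h1]
      calc 4^(k-1) * 4 ≤ k^k * (k+1) := Nat.mul_le_mul ih (by omega)
        _ ≤ (k+1)^k * (k+1) := by
            exact Nat.mul_le_mul_right _ (Nat.pow_le_pow_left (by omega) _)
        _ = (k+1)^(k+1) := by rw [← pow_succ]

lemma aux_four_pow_lt : ∀ d : ℕ, 3 ≤ d → 4^(d-1) < d^d := by
  intro d hd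
  induction d with
  | zero => omega
  | succ k ih =>
    rcases Nat.lt_or_ge k 3 with h | h
    · interval_cases k <;> first | omega | norm_num
    · have hk1 : k - 1 + 1 = k := by omega
      have h1 : (4:ℕ)^(k+1-1) = 4^(k-1) * 4 := by
        rw [← pow_succ, hk1]; simp
      rw [h1]
      calc 4^(k-1) * 4 < k^k * (k+1) :=
            Nat.mul_lt_mul_of_lt_of_le (ih h) (by omega) (by positivity)
        _ ≤ (k+1)^k * (k+1) := by
            exact Nat.mul_le_mul_right _ (Nat.pow_le_pow_left (by omega) _)
        _ = (k+1)^(k+1) := by rw [← pow_succ]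

-- Bernoulli-type: (b+1)^(m+1) ≤ b^(m+1) + (m+1) * (b+1)^m
lemma aux_bern : ∀ m b : ℕ, (b+1)^(m+1) ≤ b^(m+1) + (m+1) * (b+1)^m := by
  intro m
  induction m with
  | zero => intro b; simp
  | succ m ih =>
    intro b
    have h := ih b
    calc (b+1)^(m+2) = (b+1) * (b+1)^(m+1) := by ring
      _ ≤ (b+1) * (b^(m+1) + (m+1) * (b+1)^m) := Nat.mul_le_mul_left _ h
      _ = b * b^(m+1) + b^(m+1) + (m+1) * (b+1)^(m+1) := by ring
      _ ≤ b^(m+2) + (b+1)^(m+1) + (m+1) * (b+1)^(m+1) := by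
          have h2 : b^(m+1) ≤ (b+1)^(m+1) := Nat.pow_le_pow_left (by omega) _
          have h3 : b * b^(m+1) = b^(m+2) := by ring
          omega
      _ = b^(m+2) + (m+2) * (b+1)^(m+1) := by ring

lemma aux_mono_step (t : ℕ) (ht : 2 ≤ t) :
    t^t * t^t < (t-1)^(t-1) * (t+1)^(t+1) := by
  obtain ⟨s, rfl⟩ : ∃ s, t = s + 2 := ⟨t - 2, by omega⟩
  have h1 : s + 2 - 1 = s + 1 := by omega
  rw [h1]
  have hb := aux_bern s ((s+1)*(s+3))
  have hb1 : (s+1)*(s+3) + 1 = (s+2)^2 := by ring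
  rw [hb1] at hb
  have key : ((s+2)^2)^s * ((s+2)^4 + (s+1)*(s+3)^2) < ((s+2)^2)^s * ((s+2)^2*(s+3)^2) := by
    exact mul_lt_mul_of_pos_left (by nlinarith [sq_nonneg s]) (by positivity)
  have lhs_eq : (s+2)^(s+2) * (s+2)^(s+2) = ((s+2)^2)^s * (s+2)^4 := by
    rw [← pow_mul, ← pow_add]; ring_nf
  have e1 : (s+3)^(s+3) = (s+3)^(s+1) * (s+3)^2 := by
    rw [← pow_add]
  have rhs_eq : (s+1)^(s+1) * (s+3)^(s+3) = ((s+1)*(s+3))^(s+1) * (s+3)^2 := by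
    rw [mul_pow, e1]; ring
  have h2 : ((s+2)^2)^(s+1) * (s+3)^2
      ≤ (((s+1)*(s+3))^(s+1) + (s+1) * ((s+2)^2)^s) * (s+3)^2 :=
    Nat.mul_le_mul_right _ hb
  have h3 : ((s+2)^2)^s * ((s+2)^2*(s+3)^2) = ((s+2)^2)^(s+1) * (s+3)^2 := by
    rw [pow_succ]; ring
  have h4 : (((s+1)*(s+3))^(s+1) + (s+1) * ((s+2)^2)^s) * (s+3)^2
      = ((s+1)*(s+3))^(s+1) * (s+3)^2 + (s+1) * ((s+2)^2)^s * (s+3)^2 := by ring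
  have h5 : ((s+2)^2)^s * ((s+2)^4 + (s+1)*(s+3)^2)
      = (s+2)^(s+2) * (s+2)^(s+2) + (s+1) * ((s+2)^2)^s * (s+3)^2 := by
    rw [lhs_eq]; ring
  rw [rhs_eq]
  omega

lemma aux_exchange {y : ℕ} (hy : 2 ≤ y) : ∀ x, y ≤ x →
    x^x * y^y < (x+1)^(x+1) * (y-1)^(y-1) := by
  intro x hyx
  induction x, hyx using Nat.le_induction with
  | base =>
    have h := aux_mono_step y hy
    calc y^y * y^y < (y-1)^(y-1) * (y+1)^(y+1) := h
      _ = (y+1)^(y+1) * (y-1)^(y-1) := by ring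
  | succ x hx ih =>
    have IH := ih
    have hms := aux_mono_step (x+1) (by omega)
    rw [show x + 1 - 1 = x from rfl] at hms
    -- IH : x^x * y^y < (x+1)^(x+1) * (y-1)^(y-1)
    -- hms : (x+1)^(x+1) * (x+1)^(x+1) < x^x * (x+2)^(x+2)
    -- want : (x+1)^(x+1) * y^y < (x+2)^(x+2) * (y-1)^(y-1)
    have hxp : 0 < x := by omega
    have key : (x^x * (x+1)^(x+1)) * ((x+1)^(x+1) * y^y)
        < (x^x * (x+1)^(x+1)) * ((x+2)^(x+2) * (y-1)^(y-1)) := by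
      calc (x^x * (x+1)^(x+1)) * ((x+1)^(x+1) * y^y)
          = ((x+1)^(x+1) * (x+1)^(x+1)) * (x^x * y^y) := by ring
        _ ≤ (x^x * (x+2)^(x+2)) * (x^x * y^y) := by
            exact Nat.mul_le_mul_right _ (le_of_lt hms)
        _ < (x^x * (x+2)^(x+2)) * ((x+1)^(x+1) * (y-1)^(y-1)) := by
            exact mul_lt_mul_of_pos_left IH (Nat.mul_pos (pow_pos hxp _) (pow_pos (by omega) _))
        _ = (x^x * (x+1)^(x+1)) * ((x+2)^(x+2) * (y-1)^(y-1)) := by ring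
    exact lt_of_mul_lt_mul_left key (Nat.zero_le _)

lemma aux_prod_split2 {n : ℕ} (i j : Fin n) (hij : i ≠ j) (F : Fin n → ℕ) :
    ∏ k, F k = F i * F j * ∏ k ∈ (univ.erase i).erase j, F k := by
  rw [← Finset.mul_prod_erase univ F (mem_univ i),
      ← Finset.mul_prod_erase (univ.erase i) F (by simp [hij.symm] : j ∈ univ.erase i),
      mul_assoc]

lemma aux_sum_split2 {n : ℕ} (i j : Fin n) (hij : i ≠ j) (F : Fin n → ℕ) :
    ∑ k, F k = F i + F j + ∑ k ∈ (univ.erase i).erase j, F k := by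
  rw [← Finset.add_sum_erase univ F (mem_univ i),
      ← Finset.add_sum_erase (univ.erase i) F (by simp [hij.symm] : j ∈ univ.erase i),
      add_assoc]

lemma aux_prod_split3 {n : ℕ} (v x y : Fin n) (hvx : v ≠ x) (hvy : v ≠ y) (hxy : x ≠ y)
    (F : Fin n → ℕ) :
    ∏ k, F k = F v * F x * F y * ∏ k ∈ (((univ.erase v).erase x).erase y), F k := by
  rw [aux_prod_split2 v x hvx F,
      ← Finset.mul_prod_erase ((univ.erase v).erase x) F
        (by simp [hxy.symm, hvy.symm] : y ∈ (univ.erase v).erase x)]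
  ring

lemma aux_sum_split3 {n : ℕ} (v x y : Fin n) (hvx : v ≠ x) (hvy : v ≠ y) (hxy : x ≠ y)
    (F : Fin n → ℕ) :
    ∑ k, F k = F v + F x + F y + ∑ k ∈ (((univ.erase v).erase x).erase y), F k := by
  rw [aux_sum_split2 v x hvx F,
      ← Finset.add_sum_erase ((univ.erase v).erase x) F
        (by simp [hxy.symm, hvy.symm] : y ∈ (univ.erase v).erase x)]
  ring

lemma aux_card_erase3 {n : ℕ} (v x y : Fin n) (hvx : v ≠ x) (hvy : v ≠ y) (hxy : x ≠ y) :
    (((univ.erase v).erase x).erase y).card = n - 3 := by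
  rw [Finset.card_erase_of_mem (by simp [hxy.symm, hvy.symm]),
      Finset.card_erase_of_mem (by simp [hvx.symm]),
      Finset.card_erase_of_mem (mem_univ v), Finset.card_univ, Fintype.card_fin]
  omega

lemma aux_prod_eval {n : ℕ} (hn : 4 ≤ n) (d : Fin n → ℕ) (v x y : Fin n)
    (hvx : v ≠ x) (hvy : v ≠ y) (hxy : x ≠ y) (hv : d v = n-1) (hx : d x = 2) (hy : d y = 2)
    (hrest : ∀ i, i ≠ v → i ≠ x → i ≠ y → d i = 1) :
    ∏ i, d i ^ d i = 16 * (n-1)^(n-1) := by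
  rw [aux_prod_split3 v x y hvx hvy hxy (fun i => d i ^ d i), hv, hx, hy]
  have hone : ∏ k ∈ (((univ.erase v).erase x).erase y), d k ^ d k = 1 := by
    apply Finset.prod_eq_one
    intro k hk
    simp only [mem_erase] at hk
    simp [hrest k hk.2.2.1 hk.2.1 hk.1]
  rw [hone]
  ring

lemma aux_core : ∀ (M : ℕ) {n : ℕ}, 4 ≤ n → ∀ d : Fin n → ℕ,
    (∀ i, 1 ≤ d i) → (∀ i, d i ≤ n-1) →
    (∀ i j, i ≠ j → d i + d j ≤ n+1) → (∑ i, d i = 2*n) →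
    (n*(n-1)^2 ≤ M + ∑ i, (d i)^2) →
    (∏ i, d i ^ d i ≤ 16*(n-1)^(n-1)) ∧
    ((∏ i, d i ^ d i = 16*(n-1)^(n-1)) → ∃ v x y : Fin n, v ≠ x ∧ v ≠ y ∧ x ≠ y ∧
      d v = n-1 ∧ d x = 2 ∧ d y = 2 ∧ (∀ i, i ≠ v → i ≠ x → i ≠ y → d i = 1)) := by
  intro M
  induction M using Nat.strong_induction_on with
  | _ M IH =>
  intro n hn d h1 h2 h3 hs hM
  by_cases hmove : ∃ i j : Fin n, i ≠ j ∧ 2 ≤ d j ∧ d j ≤ d i ∧ d i + 1 ≤ n - 1 ∧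
      ∀ k, k ≠ i → k ≠ j → d k + (d i + 1) ≤ n + 1
  · -- a smoothing move exists
    obtain ⟨i, j, hij, hdj2, hdji, hdin, hk⟩ := hmove
    set d' : Fin n → ℕ := fun k => if k = i then d i + 1 else if k = j then d j - 1 else d k
      with hd'def
    have hd'i : d' i = d i + 1 := by simp [hd'def]
    have hd'j : d' j = d j - 1 := by simp [hd'def, hij.symm]
    have hd'k : ∀ k, k ≠ i → k ≠ j → d' k = d k := by
      intro k hki hkj; simp [hd'def, hki, hkj]
    -- M ≥ 1
    have hsq_le : ∑ k, (d k)^2 ≤ 2*n*(n-1) := by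
      calc ∑ k, (d k)^2 ≤ ∑ k, d k * (n-1) := by
            apply Finset.sum_le_sum
            intro k _
            rw [pow_two]
            exact Nat.mul_le_mul_left _ (h2 k)
        _ = (∑ k, d k) * (n-1) := by rw [Finset.sum_mul]
        _ = 2*n*(n-1) := by rw [hs]
    have hM1 : 1 ≤ M := by
      obtain ⟨m, hm⟩ : ∃ m, n = m + 4 := ⟨n - 4, by omega⟩
      subst hm
      have h4 : (m+4) - 1 = m + 3 := rfl
      rw [h4] at hM hsq_le
      nlinarith
    -- hypotheses for d'
    have hrestcongr : ∀ (g : ℕ → ℕ), ∑ k ∈ (univ.erase i).erase j, g (d' k)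
        = ∑ k ∈ (univ.erase i).erase j, g (d k) := by
      intro g
      apply Finset.sum_congr rfl
      intro k hk
      simp only [mem_erase] at hk
      rw [hd'k k hk.2.1 hk.1]
    have hs' : ∑ k, d' k = 2*n := by
      have e1 := aux_sum_split2 i j hij d'
      have e2 := aux_sum_split2 i j hij d
      have e3 := hrestcongr id
      simp only [id] at e3
      rw [e1, hd'i, hd'j, e3]
      omega
    have h1' : ∀ k, 1 ≤ d' k := by
      intro k
      by_cases hki : k = i
      · rw [hki, hd'i]; omega
      · by_cases hkj : k = j
        · rw [hkj, hd'j]; omega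
        · rw [hd'k k hki hkj]; exact h1 k
    have h2' : ∀ k, d' k ≤ n - 1 := by
      intro k
      by_cases hki : k = i
      · rw [hki, hd'i]; omega
      · by_cases hkj : k = j
        · rw [hkj, hd'j]; have := h2 j; omega
        · rw [hd'k k hki hkj]; exact h2 k
    have h3' : ∀ a b, a ≠ b → d' a + d' b ≤ n + 1 := by
      intro a b hab
      by_cases hai : a = i
      · rw [hai, hd'i]
        by_cases hbj : b = j
        · rw [hbj, hd'j]; have := h3 i j hij; omega
        · have hbi : b ≠ i := by rw [hai] at hab; exact Ne.symm hab
          rw [hd'k b hbi hbj]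
          have := hk b hbi hbj; omega
      · by_cases haj : a = j
        · rw [haj, hd'j]
          by_cases hbi : b = i
          · rw [hbi, hd'i]; have := h3 i j hij; omega
          · have hbj : b ≠ j := by rw [haj] at hab; exact Ne.symm hab
            rw [hd'k b hbi hbj]
            have := h3 b j hbj
            omega
        · rw [hd'k a hai haj]
          by_cases hbi : b = i
          · rw [hbi, hd'i]; have := hk a hai haj; omega
          · by_cases hbj : b = j
            · rw [hbj, hd'j]; have := h3 a j haj; omega
            · rw [hd'k b hbi hbj]; exact h3 a b hab
    have hM' : n*(n-1)^2 ≤ (M-1) + ∑ k, (d' k)^2 := by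
      have e1 := aux_sum_split2 i j hij (fun k => (d' k)^2)
      have e2 := aux_sum_split2 i j hij (fun k => (d k)^2)
      have e3 := hrestcongr (fun t => t^2)
      rw [e1, hd'i, hd'j, e3]
      have hkey : (d i)^2 + (d j)^2 + 2 ≤ (d i + 1)^2 + (d j - 1)^2 := by
        obtain ⟨e, he⟩ : ∃ e, d j = e + 2 := ⟨d j - 2, by omega⟩
        obtain ⟨c, hc⟩ : ∃ c, d i = e + 2 + c := ⟨d i - (e + 2), by omega⟩
        rw [he, hc]
        have h9 : e + 2 - 1 = e + 1 := by omega
        rw [h9]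
        nlinarith
      rw [e2] at hM
      omega
    obtain ⟨hle', -⟩ := IH (M-1) (by omega) hn d' h1' h2' h3' hs' hM'
    -- strict product increase
    have hprodlt : ∏ k, d k ^ d k < ∏ k, d' k ^ d' k := by
      have e1 := aux_prod_split2 i j hij (fun k => d k ^ d k)
      have e2 := aux_prod_split2 i j hij (fun k => d' k ^ d' k)
      have e3 : ∏ k ∈ (univ.erase i).erase j, d' k ^ d' k
          = ∏ k ∈ (univ.erase i).erase j, d k ^ d k := by
        apply Finset.prod_congr rfl
        intro k hk
        simp only [mem_erase] at hk
        rw [hd'k k hk.2.1 hk.1]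
      rw [e1, e2, hd'i, hd'j, e3]
      have hPpos : 0 < ∏ k ∈ (univ.erase i).erase j, d k ^ d k := by
        apply Finset.prod_pos
        intro k _
        exact pow_pos (h1 k) _
      exact mul_lt_mul_of_pos_right (aux_exchange hdj2 (d i) hdji) hPpos
    constructor
    · omega
    · intro heq; omega
  · -- terminal configuration
    push_neg at hmove
    have hnz : (0:ℕ) < n := by omega
    obtain ⟨i0, -, hmax⟩ := Finset.exists_max_image univ d ⟨⟨0, hnz⟩, mem_univ _⟩
    by_cases htop : d i0 = n - 1
    · -- structure: one vertex of degree n-1, two of degree 2, rest 1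
      have hle2 : ∀ j, j ≠ i0 → d j ≤ 2 := by
        intro j hj
        have := h3 j i0 hj
        omega
      have hsumT : ∑ k ∈ univ.erase i0, d k = n + 1 := by
        have := Finset.add_sum_erase univ d (mem_univ i0)
        omega
      have hcardT : (univ.erase i0).card = n - 1 := by
        rw [Finset.card_erase_of_mem (mem_univ i0), Finset.card_univ, Fintype.card_fin]
      set S := (univ.erase i0).filter (fun k => d k = 2) with hSdef
      have hsum1 : ∑ k ∈ univ.erase i0, (d k - 1) = 2 := by
        have e : ∑ k ∈ univ.erase i0, d k = ∑ k ∈ univ.erase i0, ((d k - 1) + 1) := by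
          apply Finset.sum_congr rfl
          intro k _
          have := h1 k; omega
        rw [Finset.sum_add_distrib, Finset.sum_const, smul_eq_mul, mul_one, hcardT] at e
        omega
      have hcardS : S.card = 2 := by
        have e : ∑ k ∈ univ.erase i0, (d k - 1)
            = ∑ k ∈ univ.erase i0, (if d k = 2 then 1 else 0) := by
          apply Finset.sum_congr rfl
          intro k hk
          have hk1 := h1 k
          have hk2 := hle2 k (mem_erase.mp hk).1
          interval_cases (d k) <;> simp
        calc S.card = ∑ k ∈ univ.erase i0, (if d k = 2 then 1 else 0) := by
              rw [hSdef, Finset.card_filter]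
          _ = ∑ k ∈ univ.erase i0, (d k - 1) := e.symm
          _ = 2 := hsum1
      obtain ⟨x, y, hxy, hSxy⟩ := Finset.card_eq_two.mp hcardS
      have hxS : x ∈ S := by rw [hSxy]; simp
      have hyS : y ∈ S := by rw [hSxy]; simp
      simp only [hSdef, mem_filter, mem_erase] at hxS hyS
      have hvx : i0 ≠ x := Ne.symm hxS.1.1
      have hvy : i0 ≠ y := Ne.symm hyS.1.1
      have hrest : ∀ i, i ≠ i0 → i ≠ x → i ≠ y → d i = 1 := by
        intro i hi hix hiy
        have hiS : i ∉ S := by rw [hSxy]; simp [hix, hiy]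
        simp only [hSdef, mem_filter, mem_erase, mem_univ, and_true, true_and] at hiS
        have : ¬ d i = 2 := fun h => hiS ⟨hi, h⟩
        have := h1 i
        have := hle2 i hi
        omega
      have heval := aux_prod_eval hn d i0 x y hvx hvy hxy htop hxS.2 hyS.2 hrest
      exact ⟨le_of_eq heval, fun _ => ⟨i0, x, y, hvx, hvy, hxy, htop, hxS.2, hyS.2, hrest⟩⟩
    · -- impossible: derive contradiction
      exfalso
      have hi0n : d i0 + 1 ≤ n - 1 := by have := h2 i0; omega
      have hexj : ∃ j, j ≠ i0 ∧ 2 ≤ d j := by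
        by_contra hc
        push_neg at hc
        have hsum : ∑ k ∈ univ.erase i0, d k = ∑ k ∈ univ.erase i0, 1 := by
          apply Finset.sum_congr rfl
          intro k hk
          have hk1 := h1 k
          have hk2 := hc k (mem_erase.mp hk).1
          omega
        rw [Finset.sum_const, smul_eq_mul, mul_one,
            Finset.card_erase_of_mem (mem_univ i0), Finset.card_univ, Fintype.card_fin] at hsum
        have := Finset.add_sum_erase univ d (mem_univ i0)
        have := h2 i0
        omega
      obtain ⟨j0, hj0, hj02⟩ := hexj
      have step : ∀ j, j ≠ i0 → 2 ≤ d j →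
          ∃ k, k ≠ i0 ∧ k ≠ j ∧ d k + d i0 = n + 1 ∧ 3 ≤ d k := by
        intro j hj hdj
        obtain ⟨k, hki, hkj, hklt⟩ :=
          hmove i0 j (Ne.symm hj) hdj (hmax j (mem_univ _)) hi0n
        have h31 := h3 k i0 hki
        have h4 := h2 i0
        refine ⟨k, hki, hkj, by omega, by omega⟩
      obtain ⟨k, hki, hkj0, hkeq, hk3⟩ := step j0 hj0 hj02
      obtain ⟨k', hk'i, hk'k, hk'eq, hk'3⟩ := step k hki (by omega)
      have hsplit := aux_sum_split3 i0 k k' (Ne.symm hki) (Ne.symm hk'i) (Ne.symm hk'k) d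
      have hcard3 := aux_card_erase3 i0 k k' (Ne.symm hki) (Ne.symm hk'i) (Ne.symm hk'k)
      have hge : (((univ.erase i0).erase k).erase k').card
          ≤ ∑ kk ∈ ((univ.erase i0).erase k).erase k', d kk := by
        calc (((univ.erase i0).erase k).erase k').card
            = ∑ kk ∈ ((univ.erase i0).erase k).erase k', 1 := by simp
          _ ≤ ∑ kk ∈ ((univ.erase i0).erase k).erase k', d kk :=
              Finset.sum_le_sum (fun kk _ => h1 kk)
      have hd2 := h2 i0
      omega

-- degrees at least 1 in a connected graph with ≥ 2 vertices
lemma aux_deg_ge_one {n : ℕ} (hn : 2 ≤ n) (G : SimpleGraph (Fin n)) [DecidableRel G.Adj]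
    (hc : G.Connected) (v : Fin n) : 1 ≤ G.degree v := by
  obtain ⟨w, hw⟩ := Fintype.exists_ne_of_one_lt_card (by simp; omega) v
  obtain ⟨p⟩ := hc.preconnected v w
  cases p with
  | nil => exact absurd rfl hw
  | cons h q =>
    rw [Nat.succ_le_iff]
    exact (G.degree_pos_iff_exists_adj v).mpr ⟨_, h⟩

lemma aux_pair_deg {n : ℕ} (G : SimpleGraph (Fin n)) [DecidableRel G.Adj]
    {u v : Fin n} (huv : u ≠ v) :
    G.degree u + G.degree v ≤ G.edgeFinset.card + 1 := by
  classical
  have hsub : G.incidenceFinset u ∪ G.incidenceFinset v ⊆ G.edgeFinset := by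
    intro e he
    rcases Finset.mem_union.mp he with h | h
    · exact Finset.mem_of_subset (by
        intro a ha
        rw [mem_incidenceFinset] at ha
        exact mem_edgeFinset.mpr ha.1) h
    · exact Finset.mem_of_subset (by
        intro a ha
        rw [mem_incidenceFinset] at ha
        exact mem_edgeFinset.mpr ha.1) h
  have hinter : G.incidenceFinset u ∩ G.incidenceFinset v ⊆ {s(u,v)} := by
    intro e he
    rw [Finset.mem_inter, mem_incidenceFinset, mem_incidenceFinset] at he
    obtain ⟨⟨-, hu⟩, ⟨-, hv⟩⟩ := he
    rw [Finset.mem_singleton]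
    exact (Sym2.mem_and_mem_iff huv).mp ⟨hu, hv⟩
  have h1 := Finset.card_union_add_card_inter (G.incidenceFinset u) (G.incidenceFinset v)
  have h2 : (G.incidenceFinset u ∪ G.incidenceFinset v).card ≤ G.edgeFinset.card :=
    Finset.card_le_card hsub
  have h3 : (G.incidenceFinset u ∩ G.incidenceFinset v).card ≤ 1 := by
    calc _ ≤ ({s(u,v)} : Finset (Sym2 (Fin n))).card := Finset.card_le_card hinter
      _ = 1 := Finset.card_singleton _
  rw [card_incidenceFinset_eq_degree, card_incidenceFinset_eq_degree] at h1
  omega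

lemma aux_iso_degree {V W : Type*} [Fintype V] [Fintype W] {G : SimpleGraph V}
    {H : SimpleGraph W} [DecidableRel G.Adj] [DecidableRel H.Adj] (e : G ≃g H) (v : V) :
    G.degree v = H.degree (e v) := by
  rw [← card_neighborSet_eq_degree, ← card_neighborSet_eq_degree]
  exact Fintype.card_congr (e.mapNeighborSet v)

lemma aux_star_adj {n : ℕ} (a b : Fin n) :
    (unicyclicStar n).Adj a b ↔ a ≠ b ∧ (a.val = 0 ∨ b.val = 0 ∨
      (a.val = 1 ∧ b.val = 2) ∨ (b.val = 1 ∧ a.val = 2)) := by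
  rw [unicyclicStar, SimpleGraph.fromRel_adj]
  tauto

lemma aux_star_nbr0 {n : ℕ} (hn : 4 ≤ n) :
    (unicyclicStar n).neighborFinset ⟨0, by omega⟩ = univ.erase ⟨0, by omega⟩ := by
  ext b
  rw [mem_neighborFinset, aux_star_adj, Finset.mem_erase]
  constructor
  · rintro ⟨h, -⟩; exact ⟨Ne.symm h, mem_univ b⟩
  · rintro ⟨h, -⟩
    exact ⟨Ne.symm h, Or.inl rfl⟩

lemma aux_star_nbr1 {n : ℕ} (hn : 4 ≤ n) :
    (unicyclicStar n).neighborFinset ⟨1, by omega⟩ = {⟨0, by omega⟩, ⟨2, by omega⟩} := by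
  ext b
  rw [mem_neighborFinset, aux_star_adj]
  simp only [Finset.mem_insert, Finset.mem_singleton]
  constructor
  · rintro ⟨hne, h | h | ⟨h1, h2⟩ | ⟨h1, h2⟩⟩
    · omega
    · left; exact Fin.ext h
    · right; exact Fin.ext h2
    · omega
  · rintro (rfl | rfl)
    · exact ⟨by simp [Fin.ext_iff], Or.inr (Or.inl rfl)⟩
    · exact ⟨by simp [Fin.ext_iff], Or.inr (Or.inr (Or.inl (by simp)))⟩

lemma aux_star_nbr2 {n : ℕ} (hn : 4 ≤ n) :
    (unicyclicStar n).neighborFinset ⟨2, by omega⟩ = {⟨0, by omega⟩, ⟨1, by omega⟩} := by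
  ext b
  rw [mem_neighborFinset, aux_star_adj]
  simp only [Finset.mem_insert, Finset.mem_singleton]
  constructor
  · rintro ⟨hne, h | h | ⟨h1, h2⟩ | ⟨h1, h2⟩⟩
    · omega
    · left; exact Fin.ext h
    · omega
    · right; exact Fin.ext h1
  · rintro (rfl | rfl)
    · exact ⟨by simp [Fin.ext_iff], Or.inr (Or.inl rfl)⟩
    · exact ⟨by simp [Fin.ext_iff], Or.inr (Or.inr (Or.inr (by simp)))⟩

lemma aux_star_nbrw {n : ℕ} (hn : 4 ≤ n) (w : Fin n) (hw : 3 ≤ w.val) :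
    (unicyclicStar n).neighborFinset w = {⟨0, by omega⟩} := by
  ext b
  rw [mem_neighborFinset, aux_star_adj]
  simp only [Finset.mem_singleton]
  constructor
  · rintro ⟨hne, h | h | ⟨h1, h2⟩ | ⟨h1, h2⟩⟩
    · omega
    · exact Fin.ext h
    · omega
    · omega
  · rintro rfl
    refine ⟨by simp [Fin.ext_iff]; omega, Or.inr (Or.inl rfl)⟩

lemma aux_star_deg0 {n : ℕ} (hn : 4 ≤ n) :
    (unicyclicStar n).degree ⟨0, by omega⟩ = n - 1 := by
  rw [← card_neighborFinset_eq_degree, aux_star_nbr0 hn,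
      Finset.card_erase_of_mem (mem_univ _), Finset.card_univ, Fintype.card_fin]

lemma aux_star_deg1 {n : ℕ} (hn : 4 ≤ n) :
    (unicyclicStar n).degree ⟨1, by omega⟩ = 2 := by
  rw [← card_neighborFinset_eq_degree, aux_star_nbr1 hn, Finset.card_pair (by simp [Fin.ext_iff])]

lemma aux_star_deg2 {n : ℕ} (hn : 4 ≤ n) :
    (unicyclicStar n).degree ⟨2, by omega⟩ = 2 := by
  rw [← card_neighborFinset_eq_degree, aux_star_nbr2 hn, Finset.card_pair (by simp [Fin.ext_iff])]

lemma aux_star_degw {n : ℕ} (hn : 4 ≤ n) (w : Fin n) (hw : 3 ≤ w.val) :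
    (unicyclicStar n).degree w = 1 := by
  rw [← card_neighborFinset_eq_degree, aux_star_nbrw hn w hw, Finset.card_singleton]

lemma aux_perm3 {n : ℕ} (hn : 4 ≤ n) (v x y : Fin n) (hvx : v ≠ x) (hvy : v ≠ y)
    (hxy : x ≠ y) :
    ∃ e : Equiv.Perm (Fin n), e v = ⟨0, by omega⟩ ∧ e x = ⟨1, by omega⟩ ∧ e y = ⟨2, by omega⟩ := by
  set z0 : Fin n := ⟨0, by omega⟩ with hz0
  set z1 : Fin n := ⟨1, by omega⟩ with hz1
  set z2 : Fin n := ⟨2, by omega⟩ with hz2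
  have hz01 : z0 ≠ z1 := by simp [hz0, hz1, Fin.ext_iff]
  have hz02 : z0 ≠ z2 := by simp [hz0, hz2, Fin.ext_iff]
  have hz12 : z1 ≠ z2 := by simp [hz1, hz2, Fin.ext_iff]
  set σ1 := Equiv.swap v z0 with hσ1
  set x1 := σ1 x with hx1
  set y1 := σ1 y with hy1
  set σ2 := Equiv.swap x1 z1 with hσ2
  set y2 := σ2 y1 with hy2
  set σ3 := Equiv.swap y2 z2 with hσ3
  have hσ1v : σ1 v = z0 := Equiv.swap_apply_left v z0
  have hx1ne0 : x1 ≠ z0 := by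
    rw [hx1, ← hσ1v]
    exact fun h => hvx (σ1.injective h).symm
  have hy1ne0 : y1 ≠ z0 := by
    rw [hy1, ← hσ1v]
    exact fun h => hvy (σ1.injective h).symm
  have hy1nex1 : y1 ≠ x1 := by
    rw [hy1, hx1]
    exact fun h => hxy (σ1.injective h).symm
  have hσ2z0 : σ2 z0 = z0 := Equiv.swap_apply_of_ne_of_ne (Ne.symm hx1ne0) hz01
  have hy2ne0 : y2 ≠ z0 := by
    rw [hy2, ← hσ2z0]
    exact fun h => hy1ne0 (σ2.injective h)
  have hσ2x1 : σ2 x1 = z1 := Equiv.swap_apply_left x1 z1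
  have hy2ne1 : y2 ≠ z1 := by
    rw [hy2, ← hσ2x1]
    exact fun h => hy1nex1 (σ2.injective h)
  refine ⟨σ1.trans (σ2.trans σ3), ?_, ?_, ?_⟩
  · simp only [Equiv.trans_apply]
    rw [hσ1v, hσ2z0]
    exact Equiv.swap_apply_of_ne_of_ne (Ne.symm hy2ne0) hz02
  · simp only [Equiv.trans_apply]
    rw [← hx1, hσ2x1]
    exact Equiv.swap_apply_of_ne_of_ne (Ne.symm hy2ne1) hz12
  · simp only [Equiv.trans_apply]
    rw [← hy1, ← hy2]
    exact Equiv.swap_apply_left y2 z2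

lemma aux_star_iso {n : ℕ} (hn : 4 ≤ n) (G : SimpleGraph (Fin n)) [DecidableRel G.Adj]
    (v x y : Fin n) (hvx : v ≠ x) (hvy : v ≠ y) (hxy : x ≠ y)
    (hv : G.degree v = n-1) (hx : G.degree x = 2) (hy : G.degree y = 2)
    (hrest : ∀ i, i ≠ v → i ≠ x → i ≠ y → G.degree i = 1) :
    Nonempty (G ≃g unicyclicStar n) := by
  classical
  have hnbrv : G.neighborFinset v = univ.erase v := by
    apply Finset.eq_of_subset_of_card_le
    · intro w hw
      rw [mem_neighborFinset] at hw
      exact Finset.mem_erase.mpr ⟨(G.ne_of_adj hw).symm, mem_univ _⟩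
    · rw [Finset.card_erase_of_mem (mem_univ _), Finset.card_univ, Fintype.card_fin,
        card_neighborFinset_eq_degree, hv]
  have hvall : ∀ w, w ≠ v → G.Adj v w := by
    intro w hw
    rw [← mem_neighborFinset, hnbrv]
    exact Finset.mem_erase.mpr ⟨hw, mem_univ _⟩
  have hvinx : v ∈ G.neighborFinset x := by
    rw [mem_neighborFinset]
    exact (hvall x (Ne.symm hvx)).symm
  have hviny : v ∈ G.neighborFinset y := by
    rw [mem_neighborFinset]
    exact (hvall y (Ne.symm hvy)).symm
  have hz : ∃ z ∈ G.neighborFinset x, z ≠ v := by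
    by_contra hc
    push_neg at hc
    have hsub : G.neighborFinset x ⊆ {v} := fun z hz => Finset.mem_singleton.mpr (hc z hz)
    have hcard := Finset.card_le_card hsub
    rw [card_neighborFinset_eq_degree, hx, Finset.card_singleton] at hcard
    omega
  obtain ⟨z, hzmem, hzv⟩ := hz
  have hadjxz : G.Adj x z := by rwa [← mem_neighborFinset]
  have hzx : z ≠ x := Ne.symm (G.ne_of_adj hadjxz)
  have hzy : z = y := by
    by_contra hzy
    have h1 : G.degree z = 1 := hrest z hzv hzx hzy
    have hsub : {v, x} ⊆ G.neighborFinset z := by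
      rw [Finset.insert_subset_iff, Finset.singleton_subset_iff,
          mem_neighborFinset, mem_neighborFinset]
      exact ⟨(hvall z hzv).symm, hadjxz.symm⟩
    have hcard := Finset.card_le_card hsub
    rw [Finset.card_pair hvx, card_neighborFinset_eq_degree, h1] at hcard
    omega
  rw [hzy] at hadjxz
  have hxyadj : G.Adj x y := hadjxz
  have hnbrx : G.neighborFinset x = {v, y} := by
    symm
    apply Finset.eq_of_subset_of_card_le
    · rw [Finset.insert_subset_iff, Finset.singleton_subset_iff]
      exact ⟨hvinx, mem_neighborFinset _ _ _ |>.mpr hxyadj⟩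
    · rw [card_neighborFinset_eq_degree, hx, Finset.card_pair hvy]
  have hnbry : G.neighborFinset y = {v, x} := by
    symm
    apply Finset.eq_of_subset_of_card_le
    · rw [Finset.insert_subset_iff, Finset.singleton_subset_iff]
      exact ⟨hviny, mem_neighborFinset _ _ _ |>.mpr hxyadj.symm⟩
    · rw [card_neighborFinset_eq_degree, hy, Finset.card_pair hvx]
  have hnbrw : ∀ w, w ≠ v → w ≠ x → w ≠ y → G.neighborFinset w = {v} := by
    intro w hwv hwx hwy
    symm
    apply Finset.eq_of_subset_of_card_le
    · rw [Finset.singleton_subset_iff, mem_neighborFinset]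
      exact (hvall w hwv).symm
    · rw [card_neighborFinset_eq_degree, hrest w hwv hwx hwy, Finset.card_singleton]
  have hchar : ∀ a b, G.Adj a b ↔
      a ≠ b ∧ (a = v ∨ b = v ∨ (a = x ∧ b = y) ∨ (a = y ∧ b = x)) := by
    intro a b
    constructor
    · intro h
      refine ⟨G.ne_of_adj h, ?_⟩
      by_cases hav : a = v
      · exact Or.inl hav
      by_cases hbv : b = v
      · exact Or.inr (Or.inl hbv)
      by_cases hax : a = x
      · have hb : b ∈ G.neighborFinset x := (mem_neighborFinset _ _ _).mpr (hax ▸ h)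
        rw [hnbrx, Finset.mem_insert, Finset.mem_singleton] at hb
        rcases hb with hb | hb
        · exact absurd hb hbv
        · exact Or.inr (Or.inr (Or.inl ⟨hax, hb⟩))
      by_cases hay : a = y
      · have hb : b ∈ G.neighborFinset y := (mem_neighborFinset _ _ _).mpr (hay ▸ h)
        rw [hnbry, Finset.mem_insert, Finset.mem_singleton] at hb
        rcases hb with hb | hb
        · exact absurd hb hbv
        · exact Or.inr (Or.inr (Or.inr ⟨hay, hb⟩))
      · have hb : b ∈ G.neighborFinset a := (mem_neighborFinset _ _ _).mpr h
        rw [hnbrw a hav hax hay, Finset.mem_singleton] at hb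
        exact absurd hb hbv
    · rintro ⟨hne, rfl | rfl | ⟨rfl, rfl⟩ | ⟨rfl, rfl⟩⟩
      · exact hvall b (Ne.symm hne)
      · exact (hvall a hne).symm
      · exact hxyadj
      · exact hxyadj.symm
  obtain ⟨e, hev, hex, hey⟩ := aux_perm3 hn v x y hvx hvy hxy
  have hiff0 : ∀ c : Fin n, (e c).val = 0 ↔ c = v := by
    intro c
    rw [show (0:ℕ) = ((⟨0, by omega⟩ : Fin n)).val from rfl, Fin.val_eq_val, ← hev,
      Equiv.apply_eq_iff_eq]
  have hiff1 : ∀ c : Fin n, (e c).val = 1 ↔ c = x := by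
    intro c
    rw [show (1:ℕ) = ((⟨1, by omega⟩ : Fin n)).val from rfl, Fin.val_eq_val, ← hex,
      Equiv.apply_eq_iff_eq]
  have hiff2 : ∀ c : Fin n, (e c).val = 2 ↔ c = y := by
    intro c
    rw [show (2:ℕ) = ((⟨2, by omega⟩ : Fin n)).val from rfl, Fin.val_eq_val, ← hey,
      Equiv.apply_eq_iff_eq]
  refine ⟨⟨e, ?_⟩⟩
  intro a b
  rw [aux_star_adj, hchar a b, ne_eq, Equiv.apply_eq_iff_eq,
      hiff0 a, hiff0 b, hiff1 a, hiff2 b, hiff1 b, hiff2 a]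
  tauto

lemma aux_cycle_iso {n : ℕ} (hn : 4 ≤ n) (G : SimpleGraph (Fin n)) [DecidableRel G.Adj]
    (hc : G.Connected) (hdeg : ∀ v, G.degree v = 2) :
    Nonempty (G ≃g SimpleGraph.cycleGraph n) := by
  classical
  obtain ⟨m, rfl⟩ : ∃ m, n = m + 2 := ⟨n - 2, by omega⟩
  -- choose the two neighbors of each vertex
  have hnb : ∀ v : Fin (m+2), ∃ p : Fin (m+2) × Fin (m+2), p.1 ≠ p.2 ∧ G.neighborFinset v = {p.1, p.2} := by
    intro v
    obtain ⟨a, b, hab, h⟩ := Finset.card_eq_two.mp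
      (show (G.neighborFinset v).card = 2 by rw [card_neighborFinset_eq_degree, hdeg v])
    exact ⟨(a, b), hab, h⟩
  choose nb hnbne hnbeq using hnb
  have hmem1 : ∀ v, G.Adj v (nb v).1 := by
    intro v
    rw [← mem_neighborFinset, hnbeq v]
    simp
  have hmem2 : ∀ v, G.Adj v (nb v).2 := by
    intro v
    rw [← mem_neighborFinset, hnbeq v]
    simp
  have hor : ∀ v w, G.Adj v w → w = (nb v).1 ∨ w = (nb v).2 := by
    intro v w hw
    have : w ∈ G.neighborFinset v := (mem_neighborFinset _ _ _).mpr hw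
    rw [hnbeq v] at this
    simpa using this
  set next : Fin (m+2) → Fin (m+2) → Fin (m+2) :=
    fun prev cur => if (nb cur).1 = prev then (nb cur).2 else (nb cur).1 with hnextdef
  have hnext_adj : ∀ p c, G.Adj c (next p c) := by
    intro p c
    simp only [hnextdef]
    by_cases h : (nb c).1 = p
    · rw [if_pos h]; exact hmem2 c
    · rw [if_neg h]; exact hmem1 c
  have hnext_ne : ∀ p c, next p c ≠ p := by
    intro p c
    simp only [hnextdef]
    by_cases h : (nb c).1 = p
    · rw [if_pos h, ← h]; exact (hnbne c).symm
    · rw [if_neg h]; exact h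
  -- the walk function
  set F : ℕ → Fin (m+2) × Fin (m+2) :=
    fun k => Nat.rec ((⟨0, by omega⟩ : Fin (m+2)), (nb ⟨0, by omega⟩).1)
      (fun _ p => (p.2, next p.1 p.2)) k with hFdef
  set f : ℕ → Fin (m+2) := fun k => (F k).1 with hfdef
  have hf1 : ∀ k, f (k+1) = (F k).2 := fun k => rfl
  have hfs : ∀ k, f (k+2) = next (f k) (f (k+1)) := fun k => rfl
  have hadj : ∀ k, G.Adj (f k) (f (k+1)) := by
    intro k
    cases k with
    | zero => exact hmem1 _
    | succ k => rw [hfs k]; exact hnext_adj (f k) (f (k+1))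
  have hne2 : ∀ k, f (k+2) ≠ f k := fun k => by rw [hfs k]; exact hnext_ne (f k) (f (k+1))
  -- first repeat
  have hP : ∃ p, ∃ q, q < p ∧ f q = f p := by
    obtain ⟨a, b, hab, heq⟩ := Fintype.exists_ne_map_eq_of_card_lt
      (fun i : Fin (m+3) => f i.val) (by simp)
    rcases Nat.lt_or_ge a.val b.val with h | h
    · exact ⟨b.val, a.val, h, heq⟩
    · have h' : b.val < a.val := by
        rcases Nat.lt_or_ge b.val a.val with h' | h'
        · exact h'
        · exact absurd (Fin.ext (le_antisymm h' h)) hab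
      exact ⟨a.val, b.val, h', heq.symm⟩
  set p0 := Nat.find hP with hp0def
  obtain ⟨q0, hq0lt, hq0eq⟩ := Nat.find_spec hP
  rw [← hp0def] at hq0lt hq0eq
  have hinj : ∀ a b, a < b → b < p0 → f a ≠ f b := by
    intro a b hab hbp heq
    exact Nat.find_min hP hbp ⟨a, hab, heq⟩
  have hinj' : ∀ a b, a < p0 → b < p0 → f a = f b → a = b := by
    intro a b ha hb heq
    rcases Nat.lt_trichotomy a b with h | h | h
    · exact absurd heq (hinj a b h hb)
    · exact h
    · exact absurd heq.symm (hinj b a h ha)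
  -- q0 = 0
  have hq00 : q0 = 0 := by
    by_contra hq0ne
    obtain ⟨a, rfl⟩ : ∃ a, q0 = a + 1 := ⟨q0 - 1, by omega⟩
    have hp0q2 : a + 3 ≤ p0 := by
      rcases Nat.lt_or_ge (a + 2) p0 with h | h
      · omega
      · have : p0 = a + 2 := by omega
        rw [this] at hq0eq
        exact absurd hq0eq (G.ne_of_adj (hadj (a+1)))
    obtain ⟨b, hb⟩ : ∃ b, p0 = b + 1 := ⟨p0 - 1, by omega⟩
    have hAdjprev : G.Adj (f (a+1)) (f a) := (hadj a).symm
    have hAdjnext : G.Adj (f (a+1)) (f (a+2)) := hadj (a+1)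
    have hAdjp : G.Adj (f (a+1)) (f b) := by
      have : G.Adj (f (b+1)) (f b) := (hadj b).symm
      rwa [← hb, ← hq0eq] at this
    have hcases : f b = f a ∨ f b = f (a+2) := by
      by_contra hcon
      push_neg at hcon
      have hfa2a : f a ≠ f (a+2) := (hne2 a).symm
      have hsub : ({f a, f (a+2), f b} : Finset (Fin (m+2))) ⊆ G.neighborFinset (f (a+1)) := by
        rw [Finset.insert_subset_iff, Finset.insert_subset_iff, Finset.singleton_subset_iff,
            mem_neighborFinset, mem_neighborFinset, mem_neighborFinset]
        exact ⟨hAdjprev, hAdjnext, hAdjp⟩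
      have hcard : ({f a, f (a+2), f b} : Finset (Fin (m+2))).card = 3 := by
        rw [Finset.card_insert_of_notMem (by simp [hfa2a, hcon.1.symm]),
            Finset.card_pair (fun h => hcon.2 h.symm)]
      have := Finset.card_le_card hsub
      rw [hcard, card_neighborFinset_eq_degree, hdeg] at this
      omega
    rcases hcases with hc1 | hc1
    · exact hinj a b (by omega) (by omega) hc1.symm
    · rcases Nat.lt_or_ge (a+2) b with h | h
      · exact hinj (a+2) b h (by omega) hc1.symm
      · have hba : b = a + 2 := by omega
        rw [hb, hba] at hq0eq
        exact hne2 (a+1) hq0eq.symm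
  rw [hq00] at hq0eq
  -- p0 ≥ 3
  have hp0ge3 : 3 ≤ p0 := by
    have h1 : p0 ≠ 0 := by omega
    have h2 : p0 ≠ 1 := by
      intro h
      rw [h] at hq0eq
      exact G.ne_of_adj (hadj 0) hq0eq
    have h3 : p0 ≠ 2 := by
      intro h
      rw [h] at hq0eq
      exact hne2 0 hq0eq.symm
    omega
  -- the set of visited vertices
  set S : Finset (Fin (m+2)) := (Finset.range p0).image f with hSdef
  have hmemS : ∀ k, k < p0 → f k ∈ S := by
    intro k hk
    rw [hSdef]
    exact Finset.mem_image.mpr ⟨k, Finset.mem_range.mpr hk, rfl⟩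
  -- neighbors of visited vertices are visited
  have hnbrchar : ∀ k, k < p0 → ∀ w, G.Adj (f k) w → w ∈ S := by
    intro k hk w hw
    set k1 := if k = 0 then p0 - 1 else k - 1 with hk1def
    set k2 := if k + 1 = p0 then 0 else k + 1 with hk2def
    have hk1lt : k1 < p0 := by rw [hk1def]; split <;> omega
    have hk2lt : k2 < p0 := by rw [hk2def]; split <;> omega
    have hadj1 : G.Adj (f k) (f k1) := by
      rw [hk1def]
      by_cases h : k = 0
      · rw [if_pos h, h]
        have := hadj (p0 - 1)
        rw [show p0 - 1 + 1 = p0 from by omega, ← hq0eq] at this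
        exact this.symm
      · rw [if_neg h]
        have := hadj (k-1)
        rw [show k - 1 + 1 = k from by omega] at this
        exact this.symm
    have hadj2 : G.Adj (f k) (f k2) := by
      rw [hk2def]
      by_cases h : k + 1 = p0
      · rw [if_pos h]
        have := hadj k
        rw [h, ← hq0eq] at this
        exact this
      · rw [if_neg h]
        exact hadj k
    have hne12 : f k1 ≠ f k2 := by
      rw [hk1def, hk2def]
      by_cases h : k = 0
      · rw [if_pos h, if_neg (by omega)]
        intro heq
        have := hinj' (p0-1) (k+1) (by omega) (by omega) heq
        omega
      · by_cases h2 : k + 1 = p0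
        · rw [if_neg h, if_pos h2]
          intro heq
          have := hinj' (k-1) 0 (by omega) (by omega) heq
          omega
        · rw [if_neg h, if_neg h2]
          have := hne2 (k-1)
          rw [show k - 1 + 2 = k + 1 from by omega] at this
          exact this.symm
    have hnbr : G.neighborFinset (f k) = {f k1, f k2} := by
      symm
      apply Finset.eq_of_subset_of_card_le
      · rw [Finset.insert_subset_iff, Finset.singleton_subset_iff,
            mem_neighborFinset, mem_neighborFinset]
        exact ⟨hadj1, hadj2⟩
      · rw [card_neighborFinset_eq_degree, hdeg, Finset.card_pair hne12]
    have hwmem : w ∈ G.neighborFinset (f k) := (mem_neighborFinset _ _ _).mpr hw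
    rw [hnbr, Finset.mem_insert, Finset.mem_singleton] at hwmem
    rcases hwmem with rfl | rfl
    · exact hmemS k1 hk1lt
    · exact hmemS k2 hk2lt
  have hclose : ∀ u w, u ∈ S → G.Adj u w → w ∈ S := by
    intro u w hu hadj'
    rw [hSdef] at hu
    obtain ⟨k, hk, rfl⟩ := Finset.mem_image.mp hu
    exact hnbrchar k (Finset.mem_range.mp hk) w hadj'
  have hall : ∀ w, w ∈ S := by
    have hwalk : ∀ (u w : Fin (m+2)), G.Walk u w → u ∈ S → w ∈ S := by
      intro u w p
      induction p with
      | nil => exact id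
      | cons h p ih => exact fun hu => ih (hclose _ _ hu h)
    intro w
    obtain ⟨walk⟩ := hc.preconnected (f 0) w
    exact hwalk _ _ walk (hmemS 0 (by omega))
  have hSuniv : S = Finset.univ := Finset.eq_univ_of_forall hall
  have hScard : S.card = m+2 := by rw [hSuniv, Finset.card_univ, Fintype.card_fin]
  have hScard2 : S.card = p0 := by
    rw [hSdef]
    rw [Finset.card_image_of_injOn, Finset.card_range]
    intro a ha b hb heq
    exact hinj' a b (Finset.mem_range.mp (by exact ha)) (Finset.mem_range.mp (by exact hb)) heq
  have hp0n : p0 = m+2 := by omega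
  -- the bijection
  set E : Fin (m+2) → Fin (m+2) := fun i => f i.val with hEdef
  have hEinj : Function.Injective E := by
    intro i j heq
    exact Fin.ext (hinj' i.val j.val (by omega) (by omega) heq)
  set e := Equiv.ofBijective E ((Fintype.bijective_iff_injective_and_card E).mpr
    ⟨hEinj, rfl⟩) with hedef
  have he_apply : ∀ i, e i = f i.val := fun i => rfl
  -- adjacency around the cycle
  have hone : ((1 : Fin (m+2)) : ℕ) = 1 := by
    rw [Fin.val_one']
    exact Nat.mod_eq_of_lt (by omega)
  have hA : ∀ i : Fin (m+2), G.Adj (e i) (e (i + 1)) := by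
    intro i
    rw [he_apply, he_apply]
    have hval : ((i + 1 : Fin (m+2)) : ℕ) = (i.val + 1) % (m+2) := by
      rw [Fin.add_def, hone]
    rcases Nat.lt_or_ge (i.val + 1) (m+2) with h | h
    · rw [hval, Nat.mod_eq_of_lt h]
      exact hadj i.val
    · have hieq : i.val + 1 = m+2 := by have := i.isLt; omega
      have hz : ((i + 1 : Fin (m+2)) : ℕ) = 0 := by rw [hval, hieq, Nat.mod_self]
      rw [show ((i + 1 : Fin (m+2))) = (0 : Fin (m+2)) from Fin.ext hz, Fin.val_zero]
      have h5 := hadj i.val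
      have e1 : f (i.val + 1) = f p0 := (congrArg f hieq).trans (congrArg f hp0n.symm)
      rw [e1, ← hq0eq] at h5
      exact h5
  have hsub_ne : ∀ i : Fin (m+2), i - 1 ≠ i + 1 := by
    intro i h
    have h2 : i + 2 = i := by
      have hsac : i - 1 + 1 = i := sub_add_cancel i 1
      calc i + 2 = (i + 1) + 1 := by open Fin.CommRing in ring
        _ = (i - 1) + 1 := by rw [← h]
        _ = i := hsac
    have h3 : (2 : Fin (m+2)) = 0 := by
      have := h2
      rwa [add_eq_left] at this
    have hval := congrArg Fin.val h3
    rw [Fin.val_zero] at hval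
    have h2v : ((2 : Fin (m+2)) : ℕ) = 2 % (m+2) := rfl
    rw [h2v] at hval
    rw [Nat.mod_eq_of_lt (by omega)] at hval
    omega
  have hAprev : ∀ i : Fin (m+2), G.Adj (e i) (e (i - 1)) := by
    intro i
    have := hA (i - 1)
    rw [sub_add_cancel] at this
    exact this.symm
  have hnbrE : ∀ i : Fin (m+2), G.neighborFinset (e i) = {e (i-1), e (i+1)} := by
    intro i
    symm
    apply Finset.eq_of_subset_of_card_le
    · rw [Finset.insert_subset_iff, Finset.singleton_subset_iff,
          mem_neighborFinset, mem_neighborFinset]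
      exact ⟨hAprev i, hA i⟩
    · rw [card_neighborFinset_eq_degree, hdeg,
        Finset.card_pair (fun h => hsub_ne i (e.injective h))]
  refine ⟨(SimpleGraph.Iso.symm ⟨e, ?_⟩ : G ≃g SimpleGraph.cycleGraph (m+2))⟩
  intro a b
  rw [SimpleGraph.cycleGraph_adj]
  constructor
  · intro h
    have hb : e b ∈ G.neighborFinset (e a) := (mem_neighborFinset _ _ _).mpr h
    rw [hnbrE a, Finset.mem_insert, Finset.mem_singleton] at hb
    rcases hb with hb | hb
    · left
      have hba : b = a - 1 := e.injective hb
      rw [hba]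
      exact sub_sub_cancel a 1
    · right
      have hba : b = a + 1 := e.injective hb
      rw [hba]
      exact add_sub_cancel_left a 1
  · rintro (h | h)
    · have ha : a = b + 1 := by
        rw [← h]; open Fin.CommRing in ring
      rw [ha]
      exact (hA b).symm
    · have hb : b = a + 1 := by
        rw [← h]; open Fin.CommRing in ring
      rw [hb]
      exact hA a

lemma aux_cycle_deg {n : ℕ} (hn : 4 ≤ n) (v : Fin n) :
    (SimpleGraph.cycleGraph n).degree v = 2 := by
  obtain ⟨m, rfl⟩ : ∃ m, n = m + 3 := ⟨n - 3, by omega⟩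
  exact SimpleGraph.cycleGraph_degree_three_le

theorem stmt11 {n : ℕ} (hn : 4 ≤ n) (G : SimpleGraph (Fin n)) [DecidableRel G.Adj]
    (hG : IsUnicyclic G) :
    (4 ^ n ≤ ∏ u : Fin n, (G.degree u) ^ (G.degree u)) ∧
    (∏ u : Fin n, (G.degree u) ^ (G.degree u) ≤ 16 * (n - 1) ^ (n - 1)) ∧
    ((∏ u : Fin n, (G.degree u) ^ (G.degree u) = 4 ^ n) ↔
      Nonempty (G ≃g SimpleGraph.cycleGraph n)) ∧
    ((∏ u : Fin n, (G.degree u) ^ (G.degree u) = 16 * (n - 1) ^ (n - 1)) ↔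
      Nonempty (G ≃g unicyclicStar n)) := by
  classical
  obtain ⟨hconn, hcard⟩ := hG
  have h1 : ∀ i : Fin n, 1 ≤ G.degree i := aux_deg_ge_one (by omega) G hconn
  have h2 : ∀ i : Fin n, G.degree i ≤ n - 1 := by
    intro i
    have := G.degree_lt_card_verts i
    rw [Fintype.card_fin] at this
    omega
  have h3 : ∀ i j : Fin n, i ≠ j → G.degree i + G.degree j ≤ n + 1 := by
    intro i j hij
    have := aux_pair_deg G hij
    rw [hcard] at this
    exact this
  have hs : ∑ i : Fin n, G.degree i = 2 * n := by
    rw [sum_degrees_eq_twice_card_edges, hcard]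
  obtain ⟨hub, hubeq⟩ := aux_core (n*(n-1)^2) hn (fun i => G.degree i) h1 h2 h3 hs (by omega)
  have hexp : ∑ i : Fin n, (G.degree i - 1) = n := by
    have he : ∑ i : Fin n, G.degree i = ∑ i : Fin n, ((G.degree i - 1) + 1) :=
      Finset.sum_congr rfl (fun i _ => by have := h1 i; omega)
    rw [Finset.sum_add_distrib, Finset.sum_const, Finset.card_univ, Fintype.card_fin,
        smul_eq_mul, mul_one] at he
    omega
  have hlb : 4^n ≤ ∏ u : Fin n, G.degree u ^ G.degree u := by
    calc (4:ℕ)^n = ∏ u : Fin n, 4^(G.degree u - 1) := by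
          rw [Finset.prod_pow_eq_pow_sum, hexp]
      _ ≤ ∏ u : Fin n, G.degree u ^ G.degree u :=
          Finset.prod_le_prod' (fun i _ => aux_four_pow_le (G.degree i))
  refine ⟨hlb, hub, ?_, ?_⟩
  · constructor
    · intro heq
      have hle2 : ∀ v, G.degree v ≤ 2 := by
        intro v
        by_contra hv
        push_neg at hv
        have hsum_erase : (G.degree v - 1) + ∑ i ∈ univ.erase v, (G.degree i - 1) = n := by
          rw [Finset.add_sum_erase univ (fun i => G.degree i - 1) (mem_univ v)]
          exact hexp
        have hprod_erase : 4 ^ (∑ i ∈ univ.erase v, (G.degree i - 1))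
            ≤ ∏ i ∈ univ.erase v, G.degree i ^ G.degree i := by
          rw [← Finset.prod_pow_eq_pow_sum]
          exact Finset.prod_le_prod' (fun i _ => aux_four_pow_le (G.degree i))
        have hstrict : 4^(G.degree v - 1) < G.degree v ^ G.degree v := aux_four_pow_lt _ hv
        have hmul := Nat.mul_lt_mul_of_lt_of_le hstrict hprod_erase
          (Finset.prod_pos (fun i _ => pow_pos (h1 i) _))
        rw [← pow_add, hsum_erase] at hmul
        rw [← Finset.mul_prod_erase univ (fun i => G.degree i ^ G.degree i) (mem_univ v)]
          at heq
        omega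
      have hall2 : ∀ v, G.degree v = 2 := by
        intro v
        by_contra hv
        have hv1 : G.degree v ≤ 1 := by have := hle2 v; have := h1 v; omega
        have hsum_le : ∑ i ∈ univ.erase v, G.degree i ≤ 2 * (n - 1) := by
          calc ∑ i ∈ univ.erase v, G.degree i ≤ ∑ _i ∈ univ.erase v, 2 :=
                Finset.sum_le_sum (fun i _ => hle2 i)
            _ = 2 * (n-1) := by
                rw [Finset.sum_const, smul_eq_mul, Finset.card_erase_of_mem (mem_univ v),
                  Finset.card_univ, Fintype.card_fin]
                ring
        have := Finset.add_sum_erase univ (fun i => G.degree i) (mem_univ v)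
        omega
      exact aux_cycle_iso hn G hconn hall2
    · rintro ⟨iso⟩
      have hall2 : ∀ v, G.degree v = 2 := by
        intro v
        rw [aux_iso_degree iso v, aux_cycle_deg hn]
      calc ∏ u : Fin n, G.degree u ^ G.degree u = ∏ _u : Fin n, 2^2 := by
            apply Finset.prod_congr rfl
            intro u _
            rw [hall2 u]
        _ = 4^n := by
            rw [Finset.prod_const, Finset.card_univ, Fintype.card_fin]
            norm_num
  · constructor
    · intro heq
      obtain ⟨v, x, y, hvx, hvy, hxy, hv, hx, hy, hrest⟩ := hubeq heq
      exact aux_star_iso hn G v x y hvx hvy hxy hv hx hy hrest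
    · rintro ⟨iso⟩
      have hz01 : (⟨0, by omega⟩ : Fin n) ≠ ⟨1, by omega⟩ := by simp [Fin.ext_iff]
      have hz02 : (⟨0, by omega⟩ : Fin n) ≠ ⟨2, by omega⟩ := by simp [Fin.ext_iff]
      have hz12 : (⟨1, by omega⟩ : Fin n) ≠ ⟨2, by omega⟩ := by simp [Fin.ext_iff]
      obtain ⟨v, hisov⟩ : ∃ v, iso v = ⟨0, by omega⟩ :=
        ⟨iso.symm _, iso.apply_symm_apply _⟩
      obtain ⟨x, hisox⟩ : ∃ x, iso x = ⟨1, by omega⟩ :=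
        ⟨iso.symm _, iso.apply_symm_apply _⟩
      obtain ⟨y, hisoy⟩ : ∃ y, iso y = ⟨2, by omega⟩ :=
        ⟨iso.symm _, iso.apply_symm_apply _⟩
      have hvx : v ≠ x := fun h => hz01 (by rw [← hisov, ← hisox, h])
      have hvy : v ≠ y := fun h => hz02 (by rw [← hisov, ← hisoy, h])
      have hxy : x ≠ y := fun h => hz12 (by rw [← hisox, ← hisoy, h])
      have hv : G.degree v = n - 1 := by
        rw [aux_iso_degree iso v, hisov]
        exact aux_star_deg0 hn
      have hx : G.degree x = 2 := by
        rw [aux_iso_degree iso x, hisox]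
        exact aux_star_deg1 hn
      have hy : G.degree y = 2 := by
        rw [aux_iso_degree iso y, hisoy]
        exact aux_star_deg2 hn
      have hrest : ∀ i, i ≠ v → i ≠ x → i ≠ y → G.degree i = 1 := by
        intro i hiv hix hiy
        rw [aux_iso_degree iso i]
        apply aux_star_degw hn
        have h0 : iso i ≠ iso v := fun h => hiv (iso.injective h)
        have h1' : iso i ≠ iso x := fun h => hix (iso.injective h)
        have h2' : iso i ≠ iso y := fun h => hiy (iso.injective h)
        rw [hisov] at h0
        rw [hisox] at h1'
        rw [hisoy] at h2'
        rw [Ne, Fin.ext_iff] at h0 h1' h2'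
        simp only [Ne] at h0 h1' h2'
        omega
      exact aux_prod_eval hn (fun i => G.degree i) v x y hvx hvy hxy hv hx hy hrest
end

section
/- Let G be a unicyclic graph with n ≥ 4 vertices and maximum degree Δ ≥ 3, with degree sequence x in non-increasing order. Let y be the n-tuple with y_1 = Δ, y_j = 2 for 1 < j ≤ n-Δ+2, and y_j = 1 for n-Δ+2 < j ≤ n. Then y is majorized by x. -/
open Finset SimpleGraph

theorem stmt13 {n Δ : ℕ} (hn : 4 ≤ n) (G : SimpleGraph (Fin n)) [DecidableRel G.Adj]
    (hG : IsUnicyclic G) (hΔ : G.maxDegree = Δ) (hΔ3 : 3 ≤ Δ)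
    (σ : Equiv.Perm (Fin n)) (x : ℕ → ℕ)
    (hx : ∀ i : Fin n, x i.val = G.degree (σ i))
    (hdec : ∀ i j : ℕ, i ≤ j → j < n → x j ≤ x i)
    (y : ℕ → ℕ) (hy : ∀ i, y i = if i = 0 then Δ else if i ≤ n - Δ + 1 then 2 else 1) :
    (∀ k, k ≤ n - 1 → ∑ i ∈ Finset.range k, y i ≤ ∑ i ∈ Finset.range k, x i) ∧
      ∑ i ∈ Finset.range n, y i = ∑ i ∈ Finset.range n, x i := by
  obtain ⟨hconn, hcard⟩ := hG
  have hn0 : (0 : ℕ) < n := by omega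
  haveI : Nonempty (Fin n) := ⟨⟨0, hn0⟩⟩
  -- degree sum
  have hsum : ∑ i ∈ Finset.range n, x i = 2 * n := by
    rw [Finset.sum_range fun i => x i]
    have h2 : ∑ i : Fin n, x i.val = ∑ i : Fin n, G.degree (σ i) :=
      Finset.sum_congr rfl (fun i _ => hx i)
    rw [h2, Equiv.sum_comp σ (fun v => G.degree v), SimpleGraph.sum_degrees_eq_twice_card_edges, hcard]
  -- Δ ≤ n
  obtain ⟨v, hv⟩ := G.exists_maximal_degree_vertex
  have hΔn : Δ ≤ n - 1 := by
    have := G.degree_lt_card_verts v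
    rw [← hv, hΔ, Fintype.card_fin] at this
    omega
  -- x 0 = Δ
  have hx0 : x 0 = Δ := by
    apply le_antisymm
    · have h := hx ⟨0, hn0⟩
      simp only [Fin.val_mk] at h
      rw [h, ← hΔ]
      exact G.degree_le_maxDegree _
    · have hi := hx (σ.symm v)
      rw [Equiv.apply_symm_apply, ← hv, hΔ] at hi
      calc Δ = x (σ.symm v).val := hi.symm
        _ ≤ x 0 := hdec 0 _ (Nat.zero_le _) (σ.symm v).isLt
  -- every degree is positive
  have hx1 : ∀ i, i < n → 1 ≤ x i := by
    intro i hi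
    have h := hx ⟨i, hi⟩
    rw [h]
    rw [Nat.succ_le_iff, G.degree_pos_iff_exists_adj]
    set u := σ ⟨i, hi⟩ with hu
    haveI : Nontrivial (Fin n) := Fin.nontrivial_iff_two_le.mpr (by omega)
    obtain ⟨w, hw⟩ := exists_ne u
    obtain ⟨p⟩ := hconn.preconnected u w
    cases p with
    | nil => exact absurd rfl hw.symm
    | cons h q => exact ⟨_, h⟩
  -- formula for partial sums of y
  have hySum : ∀ k, 1 ≤ k → k ≤ n →
      ∑ i ∈ Finset.range k, y i =
        if k ≤ n - Δ + 2 then Δ + 2 * (k - 1) else n + k := by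
    intro k hk1 hkn
    induction k with
    | zero => omega
    | succ m ih =>
      rcases Nat.eq_or_lt_of_le hk1 with h1 | h1
      · have h0 : m = 0 := by omega
        subst h0
        have h2 : (1:ℕ) ≤ n - Δ + 2 := by omega
        simp [hy 0, h2]
      · have hm1 : 1 ≤ m := by omega
        rw [Finset.sum_range_succ, ih hm1 (by omega), hy m]
        have hm0 : m ≠ 0 := by omega
        by_cases hc : m ≤ n - Δ + 1
        · have : m + 1 ≤ n - Δ + 2 := by omega
          simp [hm0, hc, this]
          by_cases hc2 : m ≤ n - Δ + 2 <;> simp [hc2] <;> omega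
        · have h2 : ¬ (m + 1 ≤ n - Δ + 2) := by omega
          simp [hm0, hc, h2]
          by_cases hc2 : m ≤ n - Δ + 2 <;> simp [hc2] <;> omega
  -- tail-of-ones lemma: if x i = 1 for k ≤ i < n then partial sum = n + k
  have hTail : ∀ k, k ≤ n → (∀ i, k ≤ i → i < n → x i = 1) →
      ∑ i ∈ Finset.range k, x i = n + k := by
    intro k hkn hones
    have hsplit : ∑ i ∈ Finset.range n, x i =
        ∑ i ∈ Finset.range k, x i + ∑ i ∈ Finset.Ico k n, x i := by
      rw [Finset.range_eq_Ico, ← Finset.sum_Ico_consecutive _ (Nat.zero_le k) hkn, Finset.range_eq_Ico]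
    have hone : ∑ i ∈ Finset.Ico k n, x i = n - k := by
      have hall : ∀ i ∈ Finset.Ico k n, x i = 1 := fun i hi =>
        hones i (Finset.mem_Ico.mp hi).1 (Finset.mem_Ico.mp hi).2
      rw [Finset.sum_congr rfl hall, Finset.sum_const, Nat.card_Ico, smul_eq_mul, mul_one]
    rw [hsplit, hone] at hsum
    omega
  constructor
  · intro k hk
    rcases Nat.eq_zero_or_pos k with rfl | hk1
    · simp
    rw [hySum k hk1 (by omega)]
    by_cases hc : k ≤ n - Δ + 2
    · -- need Δ + 2*(k-1) ≤ ∑ x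
      by_cases hlast : 2 ≤ x (k - 1)
      · -- all of x 1..x (k-1) are ≥ 2
        simp only [hc, if_true]
        have : ∑ i ∈ Finset.range k, x i =
            x 0 + ∑ i ∈ Finset.Ico 1 k, x i := by
          rw [Finset.range_eq_Ico, ← Finset.sum_Ico_consecutive _ (Nat.zero_le 1) hk1]
          simp
        rw [this, hx0]
        have h2 : ∀ i ∈ Finset.Ico 1 k, 2 ≤ x i := by
          intro i hi
          rw [Finset.mem_Ico] at hi
          exact le_trans hlast (hdec i (k-1) (by omega) (by omega))
        calc Δ + 2 * (k - 1) = Δ + ∑ _i ∈ Finset.Ico 1 k, 2 := by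
              simp [Nat.card_Ico]; ring
          _ ≤ Δ + ∑ i ∈ Finset.Ico 1 k, x i :=
              Nat.add_le_add_left (Finset.sum_le_sum h2) _
      · -- x (k-1) ≤ 1, so tail is all ones
        have hones : ∀ i, k - 1 ≤ i → i < n → x i = 1 := by
          intro i hi hi2
          have := hdec (k-1) i hi hi2
          have := hx1 i hi2
          omega
        have hk' : ∑ i ∈ Finset.range k, x i = n + k := by
          apply hTail k (by omega)
          intro i hi hi2; exact hones i (by omega) hi2
        rw [hk']
        simp only [hc, if_true]
        omega
    · -- k > n - Δ + 2 : show x i = 1 for i ≥ k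
      simp only [hc, if_false]
      have hxk : x k ≤ 1 := by
        by_contra hxk
        push_neg at hxk
        -- all x i for i ≤ k are ≥ 2, plus x 0 = Δ
        have h2 : ∀ i ∈ Finset.Ico 1 (k+1), 2 ≤ x i := by
          intro i hi
          rw [Finset.mem_Ico] at hi
          exact le_trans hxk (hdec i k (by omega) (by omega))
        have hsplit : ∑ i ∈ Finset.range n, x i =
            x 0 + ∑ i ∈ Finset.Ico 1 (k+1), x i + ∑ i ∈ Finset.Ico (k+1) n, x i := by
          rw [Finset.range_eq_Ico, ← Finset.sum_Ico_consecutive _ (Nat.zero_le (k+1)) (by omega : k+1 ≤ n),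
            ← Finset.sum_Ico_consecutive _ (Nat.zero_le 1) (by omega : 1 ≤ k+1)]
          simp
        have hlow : ∑ i ∈ Finset.Ico 1 (k+1), x i ≥ 2 * k := by
          calc ∑ i ∈ Finset.Ico 1 (k+1), x i ≥ ∑ _i ∈ Finset.Ico 1 (k+1), 2 :=
                Finset.sum_le_sum h2
            _ = 2 * k := by simp [Nat.card_Ico, Nat.mul_comm]
        have hlow2 : ∑ i ∈ Finset.Ico (k+1) n, x i ≥ n - (k+1) := by
          calc ∑ i ∈ Finset.Ico (k+1) n, x i ≥ ∑ _i ∈ Finset.Ico (k+1) n, 1 :=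
                Finset.sum_le_sum (fun i hi => hx1 i (Finset.mem_Ico.mp hi).2)
            _ = n - (k+1) := by simp [Nat.card_Ico]
        rw [hsplit, hx0] at hsum
        omega
      have hones : ∀ i, k ≤ i → i < n → x i = 1 := by
        intro i hi hi2
        have := hdec k i hi hi2
        have := hx1 i hi2
        omega
      rw [hTail k (by omega) hones]
  · rw [hsum, hySum n (by omega) le_rfl]
    have : ¬ (n ≤ n - Δ + 2) := by omega
    rw [if_neg this]
    omega
end

section
/- Let G be a unicyclic graph with n ≥ 4 vertices and maximum degree Δ ≥ 3, degree sequence x non-increasing, and q = ⌊n/(Δ-1)⌋. If q = 1 or n = 2Δ-2, then x is majorized by (Δ, n-Δ+1, 2, 1, ..., 1). If q ≥ 2 and n ≠ 2Δ-2, set r = n - q(Δ-1) + 1; then x is majorized by the tuple z with z_j = Δ for 1 ≤ j ≤ q, z_{q+1} = r, and z_j = 1 for q+1 < j ≤ n. -/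
open Finset SimpleGraph

theorem stmt14 {n Δ : ℕ} (hn : 4 ≤ n) (G : SimpleGraph (Fin n)) [DecidableRel G.Adj]
    (hG : IsUnicyclic G) (hΔ : G.maxDegree = Δ) (hΔ3 : 3 ≤ Δ)
    (σ : Equiv.Perm (Fin n)) (x : ℕ → ℕ)
    (hx : ∀ i : Fin n, x i.val = G.degree (σ i))
    (hdec : ∀ i j : ℕ, i ≤ j → j < n → x j ≤ x i)
    (q : ℕ) (hq : q = n / (Δ - 1)) :
    ((q = 1 ∨ n = 2 * Δ - 2) →
      ∀ z : ℕ → ℕ,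
        (∀ i, z i = if i = 0 then Δ else if i = 1 then n - Δ + 1 else if i = 2 then 2 else 1) →
        (∀ k, k ≤ n - 1 → ∑ i ∈ Finset.range k, x i ≤ ∑ i ∈ Finset.range k, z i) ∧
          ∑ i ∈ Finset.range n, x i = ∑ i ∈ Finset.range n, z i) ∧
    ((2 ≤ q ∧ n ≠ 2 * Δ - 2) →
      ∀ z : ℕ → ℕ,
        (∀ i, z i = if i < q then Δ else if i = q then n - q * (Δ - 1) + 1 else 1) →
        (∀ k, k ≤ n - 1 → ∑ i ∈ Finset.range k, x i ≤ ∑ i ∈ Finset.range k, z i) ∧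
          ∑ i ∈ Finset.range n, x i = ∑ i ∈ Finset.range n, z i) := by
  classical
  obtain ⟨hconn, hcard⟩ := hG
  have hne : Nonempty (Fin n) := ⟨⟨0, by omega⟩⟩
  -- degree sum = 2n
  have hsum : ∑ i ∈ Finset.range n, x i = 2 * n := by
    have h1 : ∑ i : Fin n, x i.val = ∑ i ∈ Finset.range n, x i :=
      Fin.sum_univ_eq_sum_range x n
    have h2 : ∑ i : Fin n, x i.val = ∑ i : Fin n, G.degree (σ i) := by
      exact Finset.sum_congr rfl fun i _ => hx i
    have h3 : ∑ i : Fin n, G.degree (σ i) = ∑ v : Fin n, G.degree v :=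
      Equiv.sum_comp σ (fun v => G.degree v)
    rw [← h1, h2, h3, G.sum_degrees_eq_twice_card_edges, hcard]
  -- degrees at most Δ
  have hxle : ∀ i, i < n → x i ≤ Δ := by
    intro i hi
    have := hx ⟨i, hi⟩
    simp only [Fin.val_mk] at this
    rw [this, ← hΔ]
    exact G.degree_le_maxDegree _
  -- degrees at least 1
  have hxge : ∀ i, i < n → 1 ≤ x i := by
    intro i hi
    have := hx ⟨i, hi⟩
    simp only [Fin.val_mk] at this
    rw [this]
    rw [Nat.one_le_iff_ne_zero, ← Nat.pos_iff_ne_zero, G.degree_pos_iff_exists_adj]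
    obtain ⟨w, hw⟩ := Fintype.exists_ne_of_one_lt_card (by simp; omega) (σ ⟨i, hi⟩)
    obtain ⟨p⟩ := hconn.preconnected (σ ⟨i, hi⟩) w
    cases p with
    | nil => exact absurd rfl hw.symm
    | cons h _ => exact ⟨_, h⟩
  -- Δ ≤ n - 1
  have hΔn : Δ + 1 ≤ n := by
    have := G.maxDegree_lt_card_verts
    rw [hΔ, Fintype.card_fin] at this
    omega
  -- pair bound : two distinct vertices' degrees sum ≤ n + 1
  have hpair : x 0 + x 1 ≤ n + 1 := by
    set u := σ ⟨0, by omega⟩ with hu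
    set v := σ ⟨1, by omega⟩ with hv
    have huv : u ≠ v := by
      intro h
      have := σ.injective h
      simp [Fin.ext_iff] at this
    have hx0 : x 0 = G.degree u := by simpa using hx ⟨0, by omega⟩
    have hx1 : x 1 = G.degree v := by simpa using hx ⟨1, by omega⟩
    have hA : (G.incidenceFinset u).card = G.degree u := G.card_incidenceFinset_eq_degree u
    have hB : (G.incidenceFinset v).card = G.degree v := G.card_incidenceFinset_eq_degree v
    have hsub : G.incidenceFinset u ∪ G.incidenceFinset v ⊆ G.edgeFinset := by
      intro e he
      rcases Finset.mem_union.1 he with h | h <;>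
        exact mem_edgeFinset.2 ((G.mem_incidenceFinset _ e).1 h).1
    have hUnion : (G.incidenceFinset u ∪ G.incidenceFinset v).card ≤ n := by
      calc (G.incidenceFinset u ∪ G.incidenceFinset v).card
          ≤ G.edgeFinset.card := Finset.card_le_card hsub
        _ = n := hcard
    have hInter : (G.incidenceFinset u ∩ G.incidenceFinset v).card ≤ 1 := by
      have : G.incidenceFinset u ∩ G.incidenceFinset v ⊆ {s(u, v)} := by
        intro e he
        have he' := Finset.mem_inter.1 he
        have := G.incidenceSet_inter_incidenceSet_subset huv
          ⟨(G.mem_incidenceFinset _ e).1 he'.1, (G.mem_incidenceFinset _ e).1 he'.2⟩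
        simpa using this
      calc (G.incidenceFinset u ∩ G.incidenceFinset v).card
          ≤ ({s(u, v)} : Finset (Sym2 (Fin n))).card := Finset.card_le_card this
        _ = 1 := Finset.card_singleton _
    have := Finset.card_union_add_card_inter (G.incidenceFinset u) (G.incidenceFinset v)
    rw [hx0, hx1, ← hA, ← hB]
    omega
  -- partial sums of x : upper bounds
  have hxk1 : ∀ k, k ≤ n → ∑ i ∈ Finset.range k, x i ≤ k * Δ := by
    intro k hk
    calc ∑ i ∈ Finset.range k, x i ≤ (Finset.range k).card • Δ :=
      Finset.sum_le_card_nsmul _ _ _ (fun i hi => hxle i (by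
        have := Finset.mem_range.1 hi; omega))
      _ = k * Δ := by simp [Finset.card_range]
  have hxk2 : ∀ k, k ≤ n → ∑ i ∈ Finset.range k, x i ≤ n + k := by
    intro k hk
    have hsplit : ∑ i ∈ Finset.range k, x i + ∑ i ∈ Finset.Ico k n, x i
        = ∑ i ∈ Finset.range n, x i := Finset.sum_range_add_sum_Ico x hk
    have hlb : (n - k) * 1 ≤ ∑ i ∈ Finset.Ico k n, x i := by
      calc (n - k) * 1 = (Finset.Ico k n).card • 1 := by simp [Nat.card_Ico]
        _ ≤ ∑ i ∈ Finset.Ico k n, x i :=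
          Finset.card_nsmul_le_sum _ _ _ (fun i hi => hxge i (Finset.mem_Ico.1 hi).2)
    omega
  constructor
  · -- case 1
    intro _ z hz
    have hz3 : ∀ k, 3 ≤ k → ∑ i ∈ Finset.range k, z i = n + k := by
      intro k hk
      have hsplit : ∑ i ∈ Finset.range 3, z i + ∑ i ∈ Finset.Ico 3 k, z i
          = ∑ i ∈ Finset.range k, z i := Finset.sum_range_add_sum_Ico z hk
      have h3 : ∑ i ∈ Finset.range 3, z i = Δ + (n - Δ + 1) + 2 := by
        simp [Finset.sum_range_succ, hz]
      have hIco : ∑ i ∈ Finset.Ico 3 k, z i = k - 3 := by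
        have : ∀ i ∈ Finset.Ico 3 k, z i = 1 := by
          intro i hi
          have hi' := (Finset.mem_Ico.1 hi).1
          rw [hz i, if_neg (by omega), if_neg (by omega), if_neg (by omega)]
        rw [Finset.sum_congr rfl this]
        simp [Nat.card_Ico]
      omega
    constructor
    · intro k hk
      rcases Nat.lt_or_ge k 3 with h3 | h3
      · interval_cases k
        · simp
        · rw [Finset.sum_range_one, Finset.sum_range_one, hz 0, if_pos rfl]
          exact hxle 0 (by omega)
        · have : ∑ i ∈ Finset.range 2, z i = Δ + (n - Δ + 1) := by
            simp [Finset.sum_range_succ, hz]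
          rw [this, Finset.sum_range_succ, Finset.sum_range_one]
          omega
      · rw [hz3 k h3]
        exact hxk2 k (by omega)
    · rw [hz3 n (by omega), hsum]
      omega
  · -- case 2
    intro _ z hz
    have hqm : q * (Δ - 1) ≤ n := by
      rw [hq]
      exact Nat.div_mul_le_self n (Δ - 1)
    have hqn : q + 1 ≤ n := by
      have h1 : n / (Δ - 1) ≤ n / 2 := Nat.div_le_div_left (by omega) (by omega)
      have h2 : n / 2 < n := Nat.div_lt_self (by omega) (by omega)
      omega
    have hrel : q * Δ = q * (Δ - 1) + q := by
      have h : Δ - 1 + 1 = Δ := by omega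
      calc q * Δ = q * (Δ - 1 + 1) := by rw [h]
        _ = q * (Δ - 1) + q := by ring
    have hzq : ∀ k, k ≤ q → ∑ i ∈ Finset.range k, z i = k * Δ := by
      intro k hk
      have : ∀ i ∈ Finset.range k, z i = Δ := by
        intro i hi
        rw [hz i, if_pos (by have := Finset.mem_range.1 hi; omega)]
      rw [Finset.sum_congr rfl this]
      simp [Finset.card_range, mul_comm]
    have hzq2 : ∀ k, q + 1 ≤ k → ∑ i ∈ Finset.range k, z i = n + k := by
      intro k hk
      have hsplit : ∑ i ∈ Finset.range (q + 1), z i + ∑ i ∈ Finset.Ico (q + 1) k, z i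
          = ∑ i ∈ Finset.range k, z i := Finset.sum_range_add_sum_Ico z hk
      have hq1 : ∑ i ∈ Finset.range (q + 1), z i = q * Δ + (n - q * (Δ - 1) + 1) := by
        rw [Finset.sum_range_succ, hzq q le_rfl, hz q, if_neg (lt_irrefl q), if_pos rfl]
      have hIco : ∑ i ∈ Finset.Ico (q + 1) k, z i = k - (q + 1) := by
        have : ∀ i ∈ Finset.Ico (q + 1) k, z i = 1 := by
          intro i hi
          have hi' := (Finset.mem_Ico.1 hi).1
          rw [hz i, if_neg (by omega), if_neg (by omega)]
        rw [Finset.sum_congr rfl this]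
        simp [Nat.card_Ico]
      omega
    constructor
    · intro k hk
      rcases le_or_gt k q with hkq | hkq
      · rw [hzq k hkq]
        exact hxk1 k (by omega)
      · rw [hzq2 k (by omega)]
        exact hxk2 k (by omega)
    · rw [hzq2 n hqn, hsum]
      omega
end

section
/- If G is a unicyclic graph with n ≥ 4 vertices and maximum degree Δ ≥ 3, and α ∈ (-∞,0) ∪ (1,∞), then Σ_{u ∈ V(G)} d_u^α ≥ Δ^α + (n-Δ+1)·2^α + Δ - 2, with equality if and only if G has degree sequence (Δ, 2, ..., 2, 1, ..., 1) with n-Δ+1 entries equal to 2 and Δ-2 entries equal to 1. -/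
open Finset SimpleGraph

lemma rpow_neg_strictConvex {p : ℝ} (hp : p < 0) :
    StrictConvexOn ℝ (Set.Ioi 0) fun x : ℝ => x ^ p := by
  apply strictConvexOn_of_deriv2_pos (convex_Ioi 0)
  · exact fun x hx => (Real.continuousAt_rpow_const x p (Or.inl (ne_of_gt hx))).continuousWithinAt
  · intro x hx
    rw [interior_Ioi] at hx
    have h2 : deriv (deriv fun x : ℝ => x ^ p) x = deriv (fun y : ℝ => p * y ^ (p-1)) x := by
      apply Filter.EventuallyEq.deriv_eq
      filter_upwards [Ioi_mem_nhds hx] with y hy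
      exact Real.deriv_rpow_const y p
    have h3 : deriv (fun y : ℝ => p * y ^ (p-1)) x = p * ((p-1) * x ^ (p-2)) := by
      rw [deriv_const_mul _ ((Real.hasDerivAt_rpow_const (Or.inl (ne_of_gt hx))).differentiableAt),
        Real.deriv_rpow_const x (p-1)]
      ring_nf
    show 0 < deriv^[2] (fun x : ℝ => x ^ p) x
    rw [Function.iterate_succ, Function.iterate_one, Function.comp_apply, h2, h3]
    have : 0 < x ^ (p - 2) := Real.rpow_pos_of_pos hx _
    nlinarith [mul_pos (mul_pos_of_neg_of_neg hp (show p - 1 < 0 by linarith)) this]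

lemma rpow_strictConvex {α : ℝ} (hα : α < 0 ∨ 1 < α) :
    StrictConvexOn ℝ (Set.Ioi 0) fun x : ℝ => x ^ α := by
  rcases hα with h | h
  · exact rpow_neg_strictConvex h
  · exact (strictConvexOn_rpow h).subset (Set.Ioi_subset_Ici le_rfl) (convex_Ioi 0)

lemma term_bound {α : ℝ} (hα : α < 0 ∨ 1 < α) {k : ℕ} (hk : 1 ≤ k) :
    (2:ℝ)^α + ((k:ℝ) - 2) * (2^α - 1) ≤ (k:ℝ)^α ∧
    ((k:ℝ)^α = 2^α + ((k:ℝ) - 2) * (2^α - 1) ↔ k ≤ 2) := by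
  by_cases h2 : k ≤ 2
  · interval_cases k
    · have h1 : ((1:ℕ):ℝ)^α = 1 := by norm_num [Real.one_rpow]
      constructor
      · rw [h1]; push_cast; ring_nf; exact le_refl _
      · simp only [h1]; constructor
        · intro _; norm_num
        · intro _; push_cast; ring
    · constructor
      · push_cast; ring_nf; exact le_refl _
      · constructor
        · intro _; norm_num
        · intro _; push_cast; ring
  · push_neg at h2
    have hk3 : (3:ℝ) ≤ (k:ℝ) := by exact_mod_cast h2
    have hK1 : (0:ℝ) < (k:ℝ) - 1 := by linarith
    have key := (rpow_strictConvex hα).2 (Set.mem_Ioi.mpr one_pos)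
      (Set.mem_Ioi.mpr (by positivity : (0:ℝ) < (k:ℝ)))
      (by intro h; rw [← h] at hk3; linarith)
      (show (0:ℝ) < ((k:ℝ)-2)/((k:ℝ)-1) from div_pos (by linarith) hK1)
      (show (0:ℝ) < 1/((k:ℝ)-1) by positivity)
      (by field_simp; ring)
    simp only [smul_eq_mul, Real.one_rpow] at key
    have hmid : ((k:ℝ)-2)/((k:ℝ)-1) * 1 + 1/((k:ℝ)-1) * (k:ℝ) = 2 := by field_simp; ring
    rw [hmid] at key
    have key2 : (2:ℝ)^α * ((k:ℝ)-1) < ((k:ℝ)-2) + (k:ℝ)^α := by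
      have := mul_lt_mul_of_pos_right key hK1
      have hrhs : (((k:ℝ)-2)/((k:ℝ)-1) * 1 + 1/((k:ℝ)-1) * (k:ℝ)^α) * ((k:ℝ)-1)
          = ((k:ℝ)-2) + (k:ℝ)^α := by field_simp
      linarith [hrhs ▸ this]
    have hstrict : (2:ℝ)^α + ((k:ℝ) - 2) * (2^α - 1) < (k:ℝ)^α := by nlinarith
    refine ⟨le_of_lt hstrict, ⟨fun h => absurd h (by linarith), fun h => absurd h (by omega)⟩⟩

lemma multiset_eq_replicate_12 {M : Multiset ℕ} (h : ∀ x ∈ M, x = 1 ∨ x = 2) :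
    M = Multiset.replicate (M.count 2) 2 + Multiset.replicate (M.count 1) 1 := by
  ext x
  rcases eq_or_ne x 1 with rfl | h1
  · simp [Multiset.count_replicate]
  rcases eq_or_ne x 2 with rfl | hx2
  · simp [Multiset.count_replicate]
  · rw [Multiset.count_eq_zero_of_notMem (fun hx => by rcases h x hx with rfl | rfl <;> simp_all)]
    simp [Multiset.count_replicate, h1.symm, hx2.symm]

theorem stmt16 {n Δ : ℕ} (hn : 4 ≤ n) (G : SimpleGraph (Fin n)) [DecidableRel G.Adj]
    (hG : IsUnicyclic G) (hΔ : G.maxDegree = Δ) (hΔ3 : 3 ≤ Δ)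
    (α : ℝ) (hα : α < 0 ∨ 1 < α) :
    (Δ : ℝ) ^ α + ((n : ℝ) - Δ + 1) * 2 ^ α + (Δ : ℝ) - 2 ≤
      ∑ u : Fin n, (G.degree u : ℝ) ^ α ∧
    ((∑ u : Fin n, (G.degree u : ℝ) ^ α =
        (Δ : ℝ) ^ α + ((n : ℝ) - Δ + 1) * 2 ^ α + (Δ : ℝ) - 2) ↔
      Finset.univ.val.map (fun u : Fin n => G.degree u) =
        Δ ::ₘ (Multiset.replicate (n - Δ + 1) 2 + Multiset.replicate (Δ - 2) 1)) := by
  classical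
  obtain ⟨hconn, hedges⟩ := hG
  have hsum : ∑ u : Fin n, G.degree u = 2 * n := by
    rw [SimpleGraph.sum_degrees_eq_twice_card_edges, hedges]
  have hdeg1 : ∀ u, 1 ≤ G.degree u := by
    intro u
    obtain ⟨v, hv⟩ : ∃ v : Fin n, v ≠ u :=
      Fintype.exists_ne_of_one_lt_card (by simp; omega) u
    obtain ⟨w⟩ := hconn.preconnected u v
    have : 0 < G.degree u := by
      rw [G.degree_pos_iff_exists_adj]
      cases w with
      | nil => exact absurd rfl hv.symm
      | cons h p => exact ⟨_, h⟩
    omega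
  have hle : ∀ u, G.degree u ≤ Δ := fun u => hΔ ▸ G.degree_le_maxDegree u
  haveI : Nonempty (Fin n) := ⟨⟨0, by omega⟩⟩
  obtain ⟨v0, hv0'⟩ := G.exists_maximal_degree_vertex
  have hv0 : G.degree v0 = Δ := hv0'.symm.trans hΔ
  have hΔn : Δ < n := by
    have := G.degree_lt_card_verts v0
    rw [hv0, Fintype.card_fin] at this
    exact this
  set f : ℕ → ℝ := fun k => (k:ℝ)^α with hf
  set L : ℕ → ℝ := fun k => (2:ℝ)^α + ((k:ℝ)-2)*((2:ℝ)^α - 1) with hL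
  have hterm : ∀ u : Fin n, L (G.degree u) ≤ f (G.degree u) := fun u => (term_bound hα (hdeg1 u)).1
  have hv0mem : v0 ∈ (univ : Finset (Fin n)) := mem_univ v0
  set s := univ.erase v0 with hs
  have hcard : s.card = n - 1 := by rw [hs, card_erase_of_mem hv0mem, card_univ, Fintype.card_fin]
  have hsplitN : G.degree v0 + ∑ x ∈ s, G.degree x = ∑ x : Fin n, G.degree x :=
    Finset.add_sum_erase univ (fun u => G.degree u) hv0mem
  rw [hv0, hsum] at hsplitN
  have hsum_s : ∑ u ∈ s, G.degree u = 2*n - Δ := by omega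
  have hsum_sR : ∑ u ∈ s, (G.degree u : ℝ) = 2*(n:ℝ) - Δ := by
    have : ((∑ u ∈ s, G.degree u : ℕ) : ℝ) = ((2*n - Δ : ℕ) : ℝ) := by rw [hsum_s]
    push_cast [Nat.cast_sub (show Δ ≤ 2*n by omega)] at this
    exact this
  have hLsum : ∑ u ∈ s, L (G.degree u) = ((n:ℝ) - Δ + 1)*(2:ℝ)^α + ((Δ:ℝ) - 2) := by
    simp only [hL]
    rw [Finset.sum_add_distrib, Finset.sum_const, hcard, ← Finset.sum_mul,
      Finset.sum_sub_distrib, hsum_sR, Finset.sum_const, hcard]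
    have h1 : ((n - 1 : ℕ) : ℝ) = (n:ℝ) - 1 := by push_cast [Nat.cast_sub (show 1 ≤ n by omega)]; ring
    simp only [nsmul_eq_mul]
    rw [h1]
    ring
  have hmain : ∑ u ∈ s, L (G.degree u) ≤ ∑ u ∈ s, f (G.degree u) :=
    Finset.sum_le_sum (fun i _ => hterm i)
  have hsplit : ∑ u : Fin n, f (G.degree u) = f Δ + ∑ u ∈ s, f (G.degree u) := by
    rw [← Finset.add_sum_erase univ _ hv0mem, hv0]
  have hfΔ : f Δ = (Δ:ℝ)^α := rfl
  constructor
  · show _ ≤ ∑ u : Fin n, f (G.degree u)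
    rw [hsplit, hfΔ]
    linarith [hLsum ▸ hmain]
  constructor
  · intro heq
    have heq' : ∑ u : Fin n, f (G.degree u) =
        (Δ : ℝ) ^ α + ((n : ℝ) - Δ + 1) * 2 ^ α + (Δ : ℝ) - 2 := heq
    rw [hsplit, hfΔ] at heq'
    have hEq : ∑ u ∈ s, f (G.degree u) = ∑ u ∈ s, L (G.degree u) := by
      rw [hLsum]; linarith
    have hall : ∀ u ∈ s, f (G.degree u) = L (G.degree u) :=
      (fun u hu => ((Finset.sum_eq_sum_iff_of_le (fun i _ => hterm i)).mp hEq.symm u hu).symm)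
    have hdeg2 : ∀ u ∈ s, G.degree u = 1 ∨ G.degree u = 2 := by
      intro u hu
      have := (term_bound hα (hdeg1 u)).2.mp (hall u hu)
      have := hdeg1 u
      omega
    have huniv : (univ : Finset (Fin n)).val = v0 ::ₘ s.val := by
      rw [hs, Finset.erase_val]
      exact (Multiset.cons_erase (Finset.mem_def.mp (Finset.mem_univ v0))).symm
    rw [huniv, Multiset.map_cons, hv0]
    congr 1
    set M := s.val.map (fun u => G.degree u) with hM
    have hM12 : ∀ x ∈ M, x = 1 ∨ x = 2 := by
      intro x hx
      obtain ⟨u, hu, rfl⟩ := Multiset.mem_map.mp hx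
      exact hdeg2 u hu
    have hrep := multiset_eq_replicate_12 hM12
    have hcardM : Multiset.card M = n - 1 := by rw [hM, Multiset.card_map]; exact hcard
    have hsumM : M.sum = 2*n - Δ := by
      rw [hM, ← Finset.sum_eq_multiset_sum]; exact hsum_s
    have hc : M.count 2 + M.count 1 = n - 1 := by
      have h := congrArg Multiset.card hrep
      simp only [Multiset.card_add, Multiset.card_replicate] at h
      omega
    have hsc : 2 * M.count 2 + M.count 1 = 2*n - Δ := by
      have h := congrArg Multiset.sum hrep
      simp only [Multiset.sum_add, Multiset.sum_replicate, smul_eq_mul] at h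
      omega
    have hc2 : M.count 2 = n - Δ + 1 := by omega
    have hc1 : M.count 1 = Δ - 2 := by omega
    rw [hrep, hc2, hc1]
  · intro hmul
    have hrw : ∑ u : Fin n, f (G.degree u) = ((univ.val.map (fun u => G.degree u)).map f).sum := by
      rw [Multiset.map_map]
      exact Finset.sum_eq_multiset_sum _ _
    show ∑ u : Fin n, f (G.degree u) = _
    rw [hrw, hmul]
    simp only [Multiset.map_cons, Multiset.map_add, Multiset.map_replicate, Multiset.sum_cons,
      Multiset.sum_add, Multiset.sum_replicate]
    have hf2 : f 2 = (2:ℝ)^α := by norm_num [hf]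
    have hf1 : f 1 = 1 := by norm_num [hf]
    rw [hf1, hf2, hfΔ, nsmul_eq_mul, nsmul_eq_mul]
    push_cast [Nat.cast_sub hΔn.le, Nat.cast_sub (show 2 ≤ Δ by omega)]
    ring
end

section
/- If G is a unicyclic graph with n ≥ 4 vertices and maximum degree Δ ≥ 3, then M_1(G) ≥ Δ² + 4n - 3Δ + 2, F(G) ≥ Δ³ + 8n - 7Δ + 6, and ID(G) ≥ 1/Δ + (n+Δ-3)/2, with each equality holding if and only if G ∈ H_n^Δ. -/
open Finset SimpleGraph

lemma ms_rep (M : Multiset ℕ) (h : ∀ x ∈ M, x = 1 ∨ x = 2) :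
    M = Multiset.replicate (M.count 2) 2 + Multiset.replicate (M.count 1) 1 := by
  rw [Multiset.ext]
  intro a
  rw [Multiset.count_add, Multiset.count_replicate, Multiset.count_replicate]
  by_cases h2 : a = 2
  · subst h2; simp
  by_cases h1 : a = 1
  · subst h1; simp
  · rw [if_neg (fun h => h2 h.symm), if_neg (fun h => h1 h.symm), add_zero]
    exact Multiset.count_eq_zero.mpr (fun hm => by rcases h a hm with h'|h' <;> simp_all)

lemma master {n Δ : ℕ} (hΔ3 : 3 ≤ Δ) (hΔn : Δ < n)
    (d : Fin n → ℕ) (hd1 : ∀ i, 1 ≤ d i) (hsum : ∑ i, d i = 2 * n)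
    (i₀ : Fin n) (hi₀ : d i₀ = Δ)
    (f : ℕ → ℝ) (a b T : ℝ)
    (hb1 : f 1 = a + b) (hb2 : f 2 = a + 2 * b)
    (hineq : ∀ k : ℕ, 1 ≤ k → a + b * k ≤ f k)
    (hstrict : ∀ k : ℕ, 3 ≤ k → a + b * k < f k)
    (hT : T = f Δ + ((n : ℝ) + 1 - Δ) * f 2 + ((Δ : ℝ) - 2) * f 1) :
    T ≤ ∑ i, f (d i) ∧ ((∑ i, f (d i) = T) ↔
      Finset.univ.val.map d = Δ ::ₘ (Multiset.replicate (n - Δ + 1) 2 + Multiset.replicate (Δ - 2) 1)) := by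
  classical
  set s : Finset (Fin n) := Finset.univ.erase i₀ with hs
  have hmem : i₀ ∈ (Finset.univ : Finset (Fin n)) := Finset.mem_univ i₀
  have hsplit : ∑ i, f (d i) = f (d i₀) + ∑ i ∈ s, f (d i) := (Finset.add_sum_erase _ _ hmem).symm
  have hde : Δ + ∑ i ∈ s, d i = 2 * n := by
    rw [← hi₀]; rw [Finset.add_sum_erase _ d hmem]; exact hsum
  have hcard : s.card = n - 1 := by
    rw [hs, Finset.card_erase_of_mem hmem, Finset.card_univ, Fintype.card_fin]
  have hcastsum : ((∑ i ∈ s, d i : ℕ) : ℝ) = 2 * n - Δ := by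
    have h1 : (Δ : ℝ) + ((∑ i ∈ s, d i : ℕ) : ℝ) = 2 * n := by exact_mod_cast congrArg (Nat.cast : ℕ → ℝ) hde
    linarith
  have hL : ∑ i ∈ s, (a + b * (d i : ℝ)) = ((n : ℝ) - 1) * a + b * (2 * n - Δ) := by
    rw [Finset.sum_add_distrib, Finset.sum_const, ← Finset.mul_sum, hcard]
    rw [← Nat.cast_sum, hcastsum]
    have : ((n - 1 : ℕ) : ℝ) = (n : ℝ) - 1 := by
      rw [Nat.cast_sub (by omega : 1 ≤ n), Nat.cast_one]
    rw [nsmul_eq_mul, this]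
  have hptw : ∀ i ∈ s, a + b * (d i : ℝ) ≤ f (d i) := fun i _ => hineq _ (hd1 i)
  have hge : ((n : ℝ) - 1) * a + b * (2 * n - Δ) ≤ ∑ i ∈ s, f (d i) := by
    rw [← hL]; exact Finset.sum_le_sum hptw
  have hTval : T = f Δ + (((n : ℝ) - 1) * a + b * (2 * n - Δ)) := by
    rw [hT, hb1, hb2]; ring
  constructor
  · rw [hsplit, hi₀, hTval]; linarith
  constructor
  · intro heq
    have heq2 : ∑ i ∈ s, (a + b * (d i : ℝ)) = ∑ i ∈ s, f (d i) := by
      rw [hL]; rw [hsplit, hi₀, hTval] at heq; linarith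
    have hall : ∀ i ∈ s, a + b * (d i : ℝ) = f (d i) :=
      (Finset.sum_eq_sum_iff_of_le hptw).mp heq2
    have h12 : ∀ i ∈ s, d i = 1 ∨ d i = 2 := by
      intro i hi
      by_contra hcon
      push_neg at hcon
      have h3 : 3 ≤ d i := by have := hd1 i; omega
      exact absurd (hall i hi) (ne_of_lt (hstrict _ h3))
    set M : Multiset ℕ := s.val.map d with hM
    have hM12 : ∀ x ∈ M, x = 1 ∨ x = 2 := by
      intro x hx
      obtain ⟨i, hi, rfl⟩ := Multiset.mem_map.mp hx
      exact h12 i hi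
    have hrep := ms_rep M hM12
    have hMcard : M.card = n - 1 := by rw [hM, Multiset.card_map]; exact hcard
    have hMsum : Δ + M.sum = 2 * n := by
      rw [hM]
      have : (s.val.map d).sum = ∑ i ∈ s, d i := rfl
      rw [this]; exact hde
    have hcc : M.count 2 + M.count 1 = n - 1 := by
      rw [hrep] at hMcard
      simpa using hMcard
    have hcs : Δ + (2 * M.count 2 + M.count 1) = 2 * n := by
      rw [hrep] at hMsum
      simp [Multiset.sum_replicate, Nat.smul_one_eq_cast, smul_eq_mul] at hMsum
      omega
    have hc2 : M.count 2 = n - Δ + 1 := by omega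
    have hc1 : M.count 1 = Δ - 2 := by omega
    have huval : (Finset.univ : Finset (Fin n)).val = i₀ ::ₘ Finset.univ.val.erase i₀ :=
      (Multiset.cons_erase (Finset.mem_val.mpr hmem)).symm
    rw [huval, Multiset.map_cons, hi₀]
    congr 1
    rw [show Finset.univ.val.erase i₀ = s.val from (Finset.erase_val _ _).symm, ← hM, hrep, hc2, hc1]
  · intro hms
    have hsum2 : ∑ i, f (d i) = ((Finset.univ.val.map d).map f).sum := by
      rw [Multiset.map_map]; rfl
    rw [hsum2, hms] at *
    simp only [Multiset.map_cons, Multiset.map_add, Multiset.map_replicate, Multiset.sum_cons,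
      Multiset.sum_add, Multiset.sum_replicate, nsmul_eq_mul]
    have e1 : ((n - Δ + 1 : ℕ) : ℝ) = (n : ℝ) - Δ + 1 := by
      push_cast [Nat.cast_sub (le_of_lt hΔn)]; ring
    have e2 : ((Δ - 2 : ℕ) : ℝ) = (Δ : ℝ) - 2 := by
      push_cast [Nat.cast_sub (by omega : 2 ≤ Δ)]; ring
    rw [e1, e2, hT]; ring

theorem stmt17 {n Δ : ℕ} (hn : 4 ≤ n) (G : SimpleGraph (Fin n)) [DecidableRel G.Adj]
    (hG : IsUnicyclic G) (hΔ : G.maxDegree = Δ) (hΔ3 : 3 ≤ Δ) :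
    ((Δ : ℝ) ^ 2 + 4 * n - 3 * Δ + 2 ≤ ∑ u : Fin n, (G.degree u : ℝ) ^ 2 ∧
      ((∑ u : Fin n, (G.degree u : ℝ) ^ 2 = (Δ : ℝ) ^ 2 + 4 * n - 3 * Δ + 2) ↔
        Finset.univ.val.map (fun u : Fin n => G.degree u) =
          Δ ::ₘ (Multiset.replicate (n - Δ + 1) 2 + Multiset.replicate (Δ - 2) 1))) ∧
    ((Δ : ℝ) ^ 3 + 8 * n - 7 * Δ + 6 ≤ ∑ u : Fin n, (G.degree u : ℝ) ^ 3 ∧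
      ((∑ u : Fin n, (G.degree u : ℝ) ^ 3 = (Δ : ℝ) ^ 3 + 8 * n - 7 * Δ + 6) ↔
        Finset.univ.val.map (fun u : Fin n => G.degree u) =
          Δ ::ₘ (Multiset.replicate (n - Δ + 1) 2 + Multiset.replicate (Δ - 2) 1))) ∧
    (1 / (Δ : ℝ) + ((n : ℝ) + Δ - 3) / 2 ≤ ∑ u : Fin n, (1 : ℝ) / (G.degree u) ∧
      ((∑ u : Fin n, (1 : ℝ) / (G.degree u) = 1 / (Δ : ℝ) + ((n : ℝ) + Δ - 3) / 2) ↔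
        Finset.univ.val.map (fun u : Fin n => G.degree u) =
          Δ ::ₘ (Multiset.replicate (n - Δ + 1) 2 + Multiset.replicate (Δ - 2) 1))) := by
  obtain ⟨hconn, hedge⟩ := hG
  have hne : Nonempty (Fin n) := ⟨⟨0, by omega⟩⟩
  have hd1 : ∀ v, 1 ≤ G.degree v := by
    intro v
    rw [Nat.one_le_iff_ne_zero, ← Nat.pos_iff_ne_zero, G.degree_pos_iff_exists_adj]
    obtain ⟨u, hu⟩ : ∃ u : Fin n, u ≠ v := by
      have : Nontrivial (Fin n) := Fin.nontrivial_iff_two_le.mpr (by omega)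
      exact exists_ne v
    obtain ⟨p⟩ := hconn.preconnected v u
    exact ⟨_, p.adj_snd (SimpleGraph.Walk.not_nil_of_ne (Ne.symm hu))⟩
  have hsum : ∑ i, G.degree i = 2 * n := by
    rw [G.sum_degrees_eq_twice_card_edges, hedge]
  obtain ⟨v₀, hv₀⟩ := G.exists_maximal_degree_vertex
  have hv₀' : G.degree v₀ = Δ := by rw [← hΔ, hv₀]
  have hΔn : Δ < n := by rw [← hv₀']; simpa using G.degree_lt_card_verts v₀
  have key2 := master hΔ3 hΔn (fun u => G.degree u) hd1 hsum v₀ hv₀'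
    (fun k => (k : ℝ) ^ 2) (-2) 3 ((Δ : ℝ) ^ 2 + 4 * n - 3 * Δ + 2)
    (by norm_num) (by norm_num)
    (by
      intro k hk
      show -2 + 3 * (k:ℝ) ≤ (k:ℝ) ^ 2
      rcases Nat.lt_or_ge k 2 with h | h
      · interval_cases k <;> norm_num
      · have h' : (2 : ℝ) ≤ k := by exact_mod_cast h
        nlinarith [mul_nonneg (by linarith : (0:ℝ) ≤ (k:ℝ) - 1) (by linarith : (0:ℝ) ≤ (k:ℝ) - 2)])
    (by
      intro k hk
      show -2 + 3 * (k:ℝ) < (k:ℝ) ^ 2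
      have h' : (3 : ℝ) ≤ k := by exact_mod_cast hk
      nlinarith)
    (by push_cast; ring)
  have key3 := master hΔ3 hΔn (fun u => G.degree u) hd1 hsum v₀ hv₀'
    (fun k => (k : ℝ) ^ 3) (-6) 7 ((Δ : ℝ) ^ 3 + 8 * n - 7 * Δ + 6)
    (by norm_num) (by norm_num)
    (by
      intro k hk
      show -6 + 7 * (k:ℝ) ≤ (k:ℝ) ^ 3
      rcases Nat.lt_or_ge k 2 with h | h
      · interval_cases k <;> norm_num
      · have h' : (2 : ℝ) ≤ k := by exact_mod_cast h
        nlinarith [mul_nonneg (mul_nonneg (by linarith : (0:ℝ) ≤ (k:ℝ) - 1)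
          (by linarith : (0:ℝ) ≤ (k:ℝ) - 2)) (by linarith : (0:ℝ) ≤ (k:ℝ) + 3)])
    (by
      intro k hk
      show -6 + 7 * (k:ℝ) < (k:ℝ) ^ 3
      have h' : (3 : ℝ) ≤ k := by exact_mod_cast hk
      nlinarith [mul_pos (mul_pos (by linarith : (0:ℝ) < (k:ℝ) - 1)
        (by linarith : (0:ℝ) < (k:ℝ) - 2)) (by linarith : (0:ℝ) < (k:ℝ) + 3)])
    (by push_cast; ring)
  have keyID := master hΔ3 hΔn (fun u => G.degree u) hd1 hsum v₀ hv₀'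
    (fun k => 1 / (k : ℝ)) (3/2) (-1/2) (1 / (Δ : ℝ) + ((n : ℝ) + Δ - 3) / 2)
    (by norm_num) (by norm_num)
    (by
      intro k hk
      show 3/2 + -1/2 * (k:ℝ) ≤ 1 / (k:ℝ)
      have hk0 : (0 : ℝ) < k := by exact_mod_cast hk
      rw [le_div_iff₀ hk0]
      rcases Nat.lt_or_ge k 2 with h | h
      · interval_cases k <;> norm_num
      · have h' : (2 : ℝ) ≤ k := by exact_mod_cast h
        nlinarith [mul_nonneg (by linarith : (0:ℝ) ≤ (k:ℝ) - 1) (by linarith : (0:ℝ) ≤ (k:ℝ) - 2)])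
    (by
      intro k hk
      show 3/2 + -1/2 * (k:ℝ) < 1 / (k:ℝ)
      have h' : (3 : ℝ) ≤ k := by exact_mod_cast hk
      have : (0 : ℝ) < 1 / (k:ℝ) := by positivity
      linarith)
    (by
      have h2 : (Δ : ℝ) ≠ 0 := by positivity
      field_simp
      ring)
  exact ⟨⟨key2.1, key2.2⟩, ⟨key3.1, key3.2⟩, ⟨keyID.1, keyID.2⟩⟩
end

section
/- Let G be a unicyclic graph with n ≥ 4 vertices and 1 ≤ p ≤ n-3 pendant vertices, with degree sequence x in non-increasing order. Let m = ⌊(2n-p)/(n-p)⌋ and t = 2n - p - m(n-p). Define a by a_j = m+1 for 1 ≤ j ≤ t, a_j = m for t < j ≤ n-p, a_j = 1 for j > n-p; and b by b_1 = p+2, b_j = 2 for 1 < j ≤ n-p, b_j = 1 for j > n-p. Then a ≺ x ≺ b (a is majorized by x, and x is majorized by b). -/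
open Finset SimpleGraph

set_option maxHeartbeats 1600000 in
theorem stmt18 {n p : ℕ} (hn : 4 ≤ n) (G : SimpleGraph (Fin n)) [DecidableRel G.Adj]
    (hG : IsUnicyclic G) (hp1 : 1 ≤ p) (hp2 : p ≤ n - 3)
    (hp : (Finset.univ.filter (fun u : Fin n => G.degree u = 1)).card = p)
    (σ : Equiv.Perm (Fin n)) (x : ℕ → ℕ)
    (hx : ∀ i : Fin n, x i.val = G.degree (σ i))
    (hdec : ∀ i j : ℕ, i ≤ j → j < n → x j ≤ x i)
    (m t : ℕ) (hm : m = (2 * n - p) / (n - p)) (ht : t = 2 * n - p - m * (n - p))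
    (a b : ℕ → ℕ)
    (ha : ∀ i, a i = if i < t then m + 1 else if i < n - p then m else 1)
    (hb : ∀ i, b i = if i = 0 then p + 2 else if i < n - p then 2 else 1) :
    ((∀ k, k ≤ n - 1 → ∑ i ∈ Finset.range k, a i ≤ ∑ i ∈ Finset.range k, x i) ∧
      ∑ i ∈ Finset.range n, a i = ∑ i ∈ Finset.range n, x i) ∧
    ((∀ k, k ≤ n - 1 → ∑ i ∈ Finset.range k, x i ≤ ∑ i ∈ Finset.range k, b i) ∧
      ∑ i ∈ Finset.range n, x i = ∑ i ∈ Finset.range n, b i) := by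
  obtain ⟨hconn, hedge⟩ := hG
  have hpn : p + 3 ≤ n := by omega
  set L : ℕ := n - p with hLdef
  have hL : p + L = n := by omega
  have hL1 : 3 ≤ L := by omega
  -- total degree sum is 2n
  have hXn : ∑ i ∈ Finset.range n, x i = 2 * n := by
    rw [← Fin.sum_univ_eq_sum_range (fun i => x i) n]
    calc ∑ i : Fin n, x i.val = ∑ i : Fin n, G.degree (σ i) :=
          Finset.sum_congr rfl (fun i _ => hx i)
      _ = ∑ v : Fin n, G.degree v := Fintype.sum_equiv σ _ _ (fun i => rfl)
      _ = 2 * n := by rw [SimpleGraph.sum_degrees_eq_twice_card_edges, hedge]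
  -- every degree is positive
  have hdegpos : ∀ v : Fin n, 0 < G.degree v := by
    intro v
    obtain ⟨w, hw⟩ := Fintype.exists_ne_of_one_lt_card (by simp; omega) v
    obtain ⟨pw⟩ := hconn.preconnected v w
    rw [SimpleGraph.degree_pos_iff_exists_adj]
    cases pw with
    | nil => exact absurd rfl hw
    | cons h _ => exact ⟨_, h⟩
  have hxpos : ∀ i, i < n → 1 ≤ x i := by
    intro i hi
    have h1 := hx ⟨i, hi⟩
    have h2 := hdegpos (σ ⟨i, hi⟩)
    have h3 : x i = G.degree (σ ⟨i, hi⟩) := h1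
    rw [h3]; exact h2
  -- exactly p entries equal to 1
  have hcount : ((Finset.range n).filter (fun i => x i = 1)).card = p := by
    rw [← hp]
    have e0 : (Finset.range n).filter (fun i => x i = 1)
        = Finset.image Fin.val ((Finset.univ : Finset (Fin n)).filter
            (fun i => G.degree (σ i) = 1)) := by
      ext j
      simp only [Finset.mem_filter, Finset.mem_range, Finset.mem_image, Finset.mem_univ,
        true_and]
      constructor
      · rintro ⟨hj, hx1⟩
        refine ⟨⟨j, hj⟩, ?_, rfl⟩
        rw [← hx ⟨j, hj⟩]; exact hx1
      · rintro ⟨i, hi, rfl⟩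
        exact ⟨i.isLt, by rw [hx i]; exact hi⟩
    have e1 : ((Finset.univ : Finset (Fin n)).filter (fun i => G.degree (σ i) = 1))
        = Finset.image σ.symm ((Finset.univ : Finset (Fin n)).filter
            (fun u => G.degree u = 1)) := by
      ext j
      simp only [Finset.mem_filter, Finset.mem_univ, true_and, Finset.mem_image]
      constructor
      · intro h; exact ⟨σ j, h, by simp⟩
      · rintro ⟨u, hu, rfl⟩; rwa [Equiv.apply_symm_apply]
    rw [e0, e1, Finset.card_image_of_injective _ Fin.val_injective,
      Finset.card_image_of_injective _ σ.symm.injective]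
  -- tail entries equal 1, head entries are ≥ 2
  have hx_tail : ∀ i, L ≤ i → i < n → x i = 1 := by
    intro i hLi hin
    by_contra hne
    have h2 : 2 ≤ x i := by have := hxpos i hin; omega
    have hsub : ((Finset.range n).filter (fun j => x j = 1)) ⊆ Finset.Ico (i + 1) n := by
      intro j hj
      simp only [Finset.mem_filter, Finset.mem_range] at hj
      simp only [Finset.mem_Ico]
      refine ⟨?_, hj.1⟩
      by_contra hji
      have hxj := hdec j i (by omega) hin
      omega
    have := Finset.card_le_card hsub
    rw [hcount, Nat.card_Ico] at this
    omega
  have hx_head : ∀ i, i < L → 2 ≤ x i := by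
    intro i hiL
    by_contra h
    have h1 : x i = 1 := by have := hxpos i (by omega); omega
    have hsub : Finset.Ico i n ⊆ (Finset.range n).filter (fun j => x j = 1) := by
      intro j hj
      simp only [Finset.mem_Ico] at hj
      simp only [Finset.mem_filter, Finset.mem_range]
      refine ⟨hj.2, ?_⟩
      have h3 := hdec i j hj.1 hj.2
      have h4 := hxpos j hj.2
      omega
    have := Finset.card_le_card hsub
    rw [hcount, Nat.card_Ico] at this
    omega
  -- arithmetic facts about m and t
  have h2np : 2 * n - p = n + L := by omega
  rw [h2np] at hm
  have hdm := Nat.div_add_mod (n + L) L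
  rw [← hm] at hdm
  have hmod : (n + L) % L < L := Nat.mod_lt _ (by omega)
  have hcomm : m * L = L * m := Nat.mul_comm m L
  have hkey : L * m + t = n + L := by omega
  have htL : t < L := by omega
  -- splitting sums
  have hsplit : ∀ k, k ≤ n →
      ∑ i ∈ Finset.range k, x i + ∑ i ∈ Finset.Ico k n, x i = 2 * n := by
    intro k hk
    rw [← hXn, Finset.range_eq_Ico, Finset.range_eq_Ico]
    exact Finset.sum_Ico_consecutive _ (Nat.zero_le k) hk
  have htail1 : ∀ k, L ≤ k → ∑ i ∈ Finset.Ico k n, x i = n - k := by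
    intro k hk
    rw [Finset.sum_congr rfl (fun i hi => by
      simp only [Finset.mem_Ico] at hi
      exact hx_tail i (by omega) hi.2)]
    simp [Nat.card_Ico]
  have htail2 : ∀ k, k ≤ L → 2 * (L - k) + p ≤ ∑ i ∈ Finset.Ico k n, x i := by
    intro k hk
    have hs : ∑ i ∈ Finset.Ico k L, x i + ∑ i ∈ Finset.Ico L n, x i
        = ∑ i ∈ Finset.Ico k n, x i :=
      Finset.sum_Ico_consecutive _ hk (by omega)
    have h1 : (Finset.Ico k L).card • 2 ≤ ∑ i ∈ Finset.Ico k L, x i := by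
      apply Finset.card_nsmul_le_sum
      intro i hi
      simp only [Finset.mem_Ico] at hi
      exact hx_head i hi.2
    rw [Nat.card_Ico, smul_eq_mul] at h1
    have h2 : ∑ i ∈ Finset.Ico L n, x i = n - L := htail1 L le_rfl
    omega
  -- partial sums of b
  have hB1 : ∀ k, 1 ≤ k → k ≤ L → ∑ i ∈ Finset.range k, b i = p + 2 * k := by
    intro k hk1 hkL
    have hins : Finset.range k = insert 0 (Finset.Ico 1 k) := by
      ext i; simp only [Finset.mem_range, Finset.mem_insert, Finset.mem_Ico]; omega
    rw [hins, Finset.sum_insert (by simp)]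
    have h2 : ∑ i ∈ Finset.Ico 1 k, b i = ∑ i ∈ Finset.Ico 1 k, 2 :=
      Finset.sum_congr rfl (fun i hi => by
        simp only [Finset.mem_Ico] at hi
        rw [hb, if_neg (by omega), if_pos (by omega)])
    rw [h2, Finset.sum_const, Nat.card_Ico, smul_eq_mul, hb 0, if_pos rfl]
    omega
  have hB2 : ∀ k, L ≤ k → ∑ i ∈ Finset.range k, b i = n + k := by
    intro k hk
    have hs : ∑ i ∈ Finset.Ico 0 L, b i + ∑ i ∈ Finset.Ico L k, b i
        = ∑ i ∈ Finset.Ico 0 k, b i :=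
      Finset.sum_Ico_consecutive _ (Nat.zero_le _) hk
    rw [← Finset.range_eq_Ico, ← Finset.range_eq_Ico] at hs
    have h1 : ∑ i ∈ Finset.range L, b i = p + 2 * L := hB1 L (by omega) le_rfl
    have h1' := hs
    have h2 : ∑ i ∈ Finset.Ico L k, b i = k - L := by
      rw [Finset.sum_congr rfl (fun i hi => by
        simp only [Finset.mem_Ico] at hi
        rw [hb, if_neg (by omega), if_neg (by omega)])]
      simp [Nat.card_Ico]
    omega
  -- partial sums of a
  have hA1 : ∀ k, k ≤ L → ∑ i ∈ Finset.range k, a i = k * m + min k t := by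
    intro k hk
    have h1 : ∀ i ∈ Finset.range k, a i = m + (if i < t then 1 else 0) := by
      intro i hi
      simp only [Finset.mem_range] at hi
      rw [ha]
      by_cases h : i < t
      · simp [h]
      · simp [h, show i < L by omega]
    rw [Finset.sum_congr rfl h1, Finset.sum_add_distrib, Finset.sum_const, Finset.card_range,
      smul_eq_mul]
    congr 1
    have h2 : ∑ i ∈ Finset.range k, (if i < t then 1 else 0)
        = ((Finset.range k).filter (fun i => i < t)).card := (Finset.card_filter _ _).symm
    have h3 : (Finset.range k).filter (fun i => i < t) = Finset.range (min k t) := by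
      ext i; simp only [Finset.mem_filter, Finset.mem_range, lt_min_iff]
    rw [h2, h3, Finset.card_range]
  have hA2 : ∀ k, L ≤ k → ∑ i ∈ Finset.range k, a i = n + k := by
    intro k hk
    have hs : ∑ i ∈ Finset.Ico 0 L, a i + ∑ i ∈ Finset.Ico L k, a i
        = ∑ i ∈ Finset.Ico 0 k, a i :=
      Finset.sum_Ico_consecutive _ (Nat.zero_le _) hk
    rw [← Finset.range_eq_Ico, ← Finset.range_eq_Ico] at hs
    have h1 : ∑ i ∈ Finset.range L, a i = L * m + t := by
      rw [hA1 L le_rfl]; congr 1; omega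
    have h2 : ∑ i ∈ Finset.Ico L k, a i = k - L := by
      rw [Finset.sum_congr rfl (fun i hi => by
        simp only [Finset.mem_Ico] at hi
        rw [ha, if_neg (by omega), if_neg (by omega)])]
      simp [Nat.card_Ico]
    omega
  refine ⟨⟨?_, ?_⟩, ⟨?_, ?_⟩⟩
  · -- a ≼ x
    intro k hk
    rcases Nat.eq_zero_or_pos k with rfl | hk1
    · simp
    rcases le_or_gt L k with hLk | hkL
    · rw [hA2 k hLk]
      have h1 := hsplit k (by omega)
      have h2 := htail1 k hLk
      omega
    · -- 1 ≤ k < L : contradiction argument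
      by_contra hcon
      push_neg at hcon
      rw [hA1 k (by omega)] at hcon
      -- x (k-1) ≤ m
      have hlow : (Finset.range k).card • x (k - 1) ≤ ∑ i ∈ Finset.range k, x i := by
        apply Finset.card_nsmul_le_sum
        intro i hi
        simp only [Finset.mem_range] at hi
        exact hdec i (k - 1) (by omega) (by omega)
      rw [Finset.card_range, smul_eq_mul] at hlow
      have hmul : k * (m + 1) = k * m + k := Nat.mul_succ k m
      have hxk : x (k - 1) < m + 1 := by
        apply Nat.lt_of_mul_lt_mul_left (a := k)
        have hmin : min k t ≤ k := min_le_left _ _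
        omega
      -- bound the middle part
      have hupp : ∑ i ∈ Finset.Ico k L, x i ≤ (Finset.Ico k L).card • m := by
        apply Finset.sum_le_card_nsmul
        intro i hi
        simp only [Finset.mem_Ico] at hi
        have := hdec (k - 1) i (by omega) (by omega)
        omega
      rw [Nat.card_Ico, smul_eq_mul] at hupp
      have hs : ∑ i ∈ Finset.Ico k L, x i + ∑ i ∈ Finset.Ico L n, x i
          = ∑ i ∈ Finset.Ico k n, x i :=
        Finset.sum_Ico_consecutive _ (by omega) (by omega)
      have h2 : ∑ i ∈ Finset.Ico L n, x i = n - L := htail1 L le_rfl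
      have h3 := hsplit k (by omega)
      have e1 : k * m + (L - k) * m = L * m := by
        rw [← Nat.add_mul]; congr 1; omega
      have hmin2 : min k t ≤ t := min_le_right _ _
      omega
  · rw [hA2 n (by omega), hXn]; omega
  · -- x ≼ b
    intro k hk
    rcases Nat.eq_zero_or_pos k with rfl | hk1
    · simp
    rcases le_or_gt L k with hLk | hkL
    · rw [hB2 k hLk]
      have h1 := hsplit k (by omega)
      have h2 := htail1 k hLk
      omega
    · rw [hB1 k hk1 (by omega)]
      have h1 := hsplit k (by omega)
      have h2 := htail2 k (by omega)
      omega
  · rw [hB2 n (by omega), hXn]; omega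
end

section
/- If G is a unicyclic graph with n ≥ 4 vertices and 1 ≤ p ≤ n-3 pendant vertices, and a > 1 or 0 < a ≤ e^{-1}, then with m = ⌊(2n-p)/(n-p)⌋ and t = 2n - p - m(n-p): t(m+1)a^{m+1} + (n-p-t)m·a^m + pa ≤ SEI_a(G) ≤ (p+2)a^{p+2} + 2(n-p-1)a² + pa. -/
open Finset SimpleGraph

lemma aux_hasDeriv1 (L x : ℝ) :
    HasDerivAt (fun x : ℝ => x * Real.exp (L * x)) ((1 + L * x) * Real.exp (L * x)) x := by
  have h1 : HasDerivAt (fun x : ℝ => Real.exp (L * x)) (Real.exp (L * x) * L) x :=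
    by simpa using ((hasDerivAt_id x).const_mul L).exp
  have := (hasDerivAt_id x).mul h1
  exact this.congr_deriv (by simp only [id, one_mul]; ring)

lemma aux_hasDeriv2 (L x : ℝ) :
    HasDerivAt (fun x : ℝ => (1 + L * x) * Real.exp (L * x)) (L * (2 + L * x) * Real.exp (L * x)) x := by
  have h1 : HasDerivAt (fun x : ℝ => Real.exp (L * x)) (Real.exp (L * x) * L) x :=
    by simpa using ((hasDerivAt_id x).const_mul L).exp
  have h0 : HasDerivAt (fun x : ℝ => 1 + L * x) L x := by
    simpa using ((hasDerivAt_id x).const_mul L).const_add 1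
  have := h0.mul h1
  exact this.congr_deriv (by ring)

lemma aux_convex (L : ℝ) (hL : 0 < L ∨ L ≤ -1) :
    ConvexOn ℝ (Set.Ici (2:ℝ)) (fun x : ℝ => x * Real.exp (L * x)) := by
  have hd1 : deriv (fun x : ℝ => x * Real.exp (L * x)) = fun x => (1 + L * x) * Real.exp (L * x) :=
    funext fun x => (aux_hasDeriv1 L x).deriv
  apply convexOn_of_deriv2_nonneg (convex_Ici 2)
  · exact (Continuous.continuousOn (by continuity))
  · intro x _; exact (aux_hasDeriv1 L x).differentiableAt.differentiableWithinAt
  · intro x _; rw [hd1]; exact (aux_hasDeriv2 L x).differentiableAt.differentiableWithinAt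
  · intro x hx
    have hx2 : (2:ℝ) ≤ x := le_of_lt (by simpa using hx)
    have : deriv^[2] (fun x : ℝ => x * Real.exp (L * x)) x = L * (2 + L * x) * Real.exp (L * x) := by
      rw [Function.iterate_succ, Function.iterate_one, Function.comp_apply, hd1]
      exact (aux_hasDeriv2 L x).deriv
    rw [this]
    have he : 0 < Real.exp (L * x) := Real.exp_pos _
    rcases hL with h | h
    · have : 0 < 2 + L * x := by nlinarith
      positivity
    · have : 2 + L * x ≤ 0 := by nlinarith
      have h2 : 0 ≤ L * (2 + L * x) := by nlinarith
      positivity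

lemma aux_secant_low {f : ℝ → ℝ} (hc : ConvexOn ℝ (Set.Ici (2:ℝ)) f) {x y : ℝ}
    (hy : 2 ≤ y) (hx : 2 ≤ x) (hcase : x ≤ y ∨ y + 1 ≤ x) :
    f y + (x - y) * (f (y+1) - f y) ≤ f x := by
  have hy1 : (2:ℝ) ≤ y + 1 := by linarith
  rcases hcase with h | h
  · rcases eq_or_lt_of_le h with rfl | hlt
    · simp
    · have hs := hc.secant_mono (Set.mem_Ici.2 hy) (Set.mem_Ici.2 hx) (Set.mem_Ici.2 hy1)
        (by intro he; rw [he] at hlt; exact lt_irrefl _ hlt)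
        (by intro he; linarith [he ▸ (lt_irrefl y)]) (by linarith)
      have hd : y + 1 - y = 1 := by ring
      rw [hd, div_one] at hs
      have hxy : x - y < 0 := by linarith
      rw [div_le_iff_of_neg hxy] at hs
      linarith
  · rcases eq_or_lt_of_le h with h' | hlt
    · rw [← h']
      have : f y + (y + 1 - y) * (f (y+1) - f y) = f (y+1) := by ring
      linarith
    · have hs := hc.secant_mono (Set.mem_Ici.2 hy) (Set.mem_Ici.2 hy1) (Set.mem_Ici.2 hx)
        (by intro he; linarith [he ▸ (lt_irrefl y)]) (by intro he; linarith) (by linarith)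
      have hd : y + 1 - y = 1 := by ring
      rw [hd, div_one, le_div_iff₀ (by linarith : (0:ℝ) < x - y)] at hs
      linarith

lemma aux_secant_up {f : ℝ → ℝ} (hc : ConvexOn ℝ (Set.Ici (2:ℝ)) f) {x z : ℝ}
    (hx2 : 2 ≤ x) (hxz : x ≤ z) (hz : 2 < z) :
    f x ≤ f 2 + (x - 2)/(z - 2) * (f z - f 2) := by
  rcases eq_or_lt_of_le hx2 with h | h
  · rw [← h]; simp
  · have hs := hc.secant_mono (Set.mem_Ici.2 le_rfl) (Set.mem_Ici.2 hx2)
      (Set.mem_Ici.2 hz.le) (by intro he; linarith) (by intro he; linarith) hxz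
    rw [div_le_div_iff₀ (by linarith) (by linarith)] at hs
    have hz2 : (0:ℝ) < z - 2 := by linarith
    have e : f 2 + (x - 2)/(z - 2) * (f z - f 2) - f x
        = ((f z - f 2)*(x-2) - (f x - f 2)*(z-2)) / (z-2) := by field_simp; ring
    have h0 : 0 ≤ ((f z - f 2)*(x-2) - (f x - f 2)*(z-2)) / (z-2) :=
      div_nonneg (by linarith) hz2.le
    linarith

theorem stmt19 {n p : ℕ} (hn : 4 ≤ n) (G : SimpleGraph (Fin n)) [DecidableRel G.Adj]
    (hG : IsUnicyclic G) (hp1 : 1 ≤ p) (hp2 : p ≤ n - 3)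
    (hp : (Finset.univ.filter (fun u : Fin n => G.degree u = 1)).card = p)
    (a : ℝ) (ha : 1 < a ∨ (0 < a ∧ a ≤ Real.exp (-1)))
    (m t : ℕ) (hm : m = (2 * n - p) / (n - p)) (ht : t = 2 * n - p - m * (n - p)) :
    (t : ℝ) * (m + 1) * a ^ (m + 1) + ((n : ℝ) - p - t) * m * a ^ m + (p : ℝ) * a ≤
      ∑ u : Fin n, (G.degree u : ℝ) * a ^ (G.degree u) ∧
    ∑ u : Fin n, (G.degree u : ℝ) * a ^ (G.degree u) ≤
      ((p : ℝ) + 2) * a ^ (p + 2) + 2 * ((n : ℝ) - p - 1) * a ^ 2 + (p : ℝ) * a := by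
  obtain ⟨hconn, hedge⟩ := hG
  have hpn : p + 3 ≤ n := by omega
  -- minimum degree 1
  have hdegpos : ∀ u : Fin n, 1 ≤ G.degree u := by
    intro u
    haveI : Nontrivial (Fin n) := Fin.nontrivial_iff_two_le.2 (by omega)
    obtain ⟨v, hv⟩ := exists_ne u
    obtain ⟨w⟩ := hconn.preconnected u v
    cases w with
    | nil => exact absurd rfl (Ne.symm hv)
    | cons hadj _ => exact (G.degree_pos_iff_exists_adj u).2 ⟨_, hadj⟩
  have hsum : ∑ u, G.degree u = 2 * n := by
    rw [G.sum_degrees_eq_twice_card_edges, hedge]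
  set P := Finset.univ.filter (fun u : Fin n => G.degree u = 1) with hPdef
  set R := Finset.univ.filter (fun u : Fin n => ¬ G.degree u = 1) with hRdef
  have hcardR : R.card = n - p := by
    have h := Finset.card_filter_add_card_filter_not
      (s := (Finset.univ : Finset (Fin n))) (p := fun u => G.degree u = 1)
    have h' : P.card + R.card = n := by
      simpa [hPdef, hRdef, Finset.card_univ] using h
    omega
  have hsplitdeg : ∑ u ∈ P, G.degree u + ∑ u ∈ R, G.degree u = 2 * n := by
    rw [Finset.sum_filter_add_sum_filter_not]; exact hsum
  have hsumP : ∑ u ∈ P, G.degree u = p := by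
    rw [Finset.sum_congr rfl (fun u hu => (Finset.mem_filter.1 hu).2), Finset.sum_const, hp,
      smul_eq_mul, mul_one]
  have hsumR : ∑ u ∈ R, G.degree u = 2 * n - p := by omega
  have hdeg2 : ∀ u ∈ R, 2 ≤ G.degree u := by
    intro u hu
    have h1 := hdegpos u
    have h2 := (Finset.mem_filter.1 hu).2
    omega
  have hdegub : ∀ u ∈ R, G.degree u ≤ p + 2 := by
    intro u hu
    have herase : ∑ v ∈ R.erase u, G.degree v + G.degree u = ∑ v ∈ R, G.degree v :=
      Finset.sum_erase_add _ _ hu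
    have hlb : (R.erase u).card • 2 ≤ ∑ v ∈ R.erase u, G.degree v :=
      Finset.card_nsmul_le_sum _ _ _ (fun v hv => hdeg2 v (Finset.mem_of_mem_erase hv))
    have hce : (R.erase u).card = n - p - 1 := by
      rw [Finset.card_erase_of_mem hu, hcardR]
    rw [hce, smul_eq_mul] at hlb
    omega
  -- convexity setup
  have ha0 : 0 < a := by
    rcases ha with h | h
    · linarith
    · exact h.1
  have hL : 0 < Real.log a ∨ Real.log a ≤ -1 := by
    rcases ha with h | h
    · exact Or.inl (Real.log_pos h)
    · right
      have := Real.log_le_log h.1 h.2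
      rwa [Real.log_exp] at this
  set g : ℝ → ℝ := fun x => x * Real.exp (Real.log a * x) with hg
  have hconv : ConvexOn ℝ (Set.Ici 2) g := aux_convex _ hL
  have hcast : ∀ d : ℕ, (d : ℝ) * a ^ d = g d := by
    intro d
    have : a ^ d = Real.exp (Real.log a * (d : ℝ)) := by
      rw [mul_comm, Real.exp_nat_mul, Real.exp_log ha0]
    rw [hg]; simp only []; rw [this]
  -- arithmetic on m, t
  have hnp0 : 0 < n - p := by omega
  have hm2 : 2 ≤ m := by
    rw [hm, Nat.le_div_iff_mul_le hnp0]; omega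
  have hdiv : (2*n - p) % (n - p) + m * (n - p) = 2*n - p := by
    rw [hm]; exact Nat.mod_add_div' _ _
  have hmod : (2*n - p) % (n - p) < n - p := Nat.mod_lt _ hnp0
  have htlt : t < n - p := by omega
  have htm : t + m * (n - p) = 2 * n - p := by omega
  -- cast identities
  have e1 : ((n - p : ℕ) : ℝ) = (n : ℝ) - p := by
    rw [Nat.cast_sub (by omega : p ≤ n)]
  have e2 : ((2*n - p : ℕ) : ℝ) = 2 * (n : ℝ) - p := by
    rw [Nat.cast_sub (by omega : p ≤ 2*n)]; push_cast; ring
  have e3 : (t : ℝ) = 2 * (n : ℝ) - p - m * ((n : ℝ) - p) := by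
    have h := congrArg (fun k : ℕ => (k : ℝ)) htm
    push_cast at h
    rw [e1] at h
    linarith
  -- sum over P
  have hsumPa : ∑ u ∈ P, (G.degree u : ℝ) * a ^ (G.degree u) = (p : ℝ) * a := by
    rw [Finset.sum_congr rfl (fun u hu => by
      rw [(Finset.mem_filter.1 hu).2]; norm_num : ∀ u ∈ P, (G.degree u : ℝ) * a ^ (G.degree u) = a)]
    rw [Finset.sum_const, hp, nsmul_eq_mul]
  have hsplit : ∑ u : Fin n, (G.degree u : ℝ) * a ^ (G.degree u)
      = (p : ℝ) * a + ∑ u ∈ R, (G.degree u : ℝ) * a ^ (G.degree u) := by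
    rw [← hsumPa, Finset.sum_filter_add_sum_filter_not]
  -- cast sum over R
  have hsumRcast : ∑ u ∈ R, (G.degree u : ℝ) = 2 * (n : ℝ) - p := by
    rw [← Nat.cast_sum, hsumR, e2]
  have hcardRcast : ((R.card : ℕ) : ℝ) = (n : ℝ) - p := by rw [hcardR, e1]
  constructor
  · -- lower bound
    have hptw : ∀ u ∈ R, g m + ((G.degree u : ℝ) - m) * (g ((m:ℝ)+1) - g m)
        ≤ (G.degree u : ℝ) * a ^ (G.degree u) := by
      intro u hu
      rw [hcast]
      refine aux_secant_low hconv (by exact_mod_cast hm2) (by exact_mod_cast hdeg2 u hu) ?_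
      rcases le_or_gt (G.degree u) m with h | h
      · exact Or.inl (by exact_mod_cast h)
      · exact Or.inr (by exact_mod_cast h)
    have hsum1 : ∑ u ∈ R, (g m + ((G.degree u : ℝ) - m) * (g ((m:ℝ)+1) - g m))
        ≤ ∑ u ∈ R, (G.degree u : ℝ) * a ^ (G.degree u) := Finset.sum_le_sum hptw
    have hsum2 : ∑ u ∈ R, (g m + ((G.degree u : ℝ) - m) * (g ((m:ℝ)+1) - g m))
        = ((n:ℝ) - p) * g m + ((2*(n:ℝ) - p) - ((n:ℝ) - p) * m) * (g ((m:ℝ)+1) - g m) := by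
      rw [Finset.sum_add_distrib, Finset.sum_const, ← Finset.sum_mul, Finset.sum_sub_distrib,
        Finset.sum_const, hsumRcast, nsmul_eq_mul, nsmul_eq_mul, hcardRcast]
    rw [hsplit]
    have key : (t : ℝ) * (m + 1) * a ^ (m + 1) + ((n : ℝ) - p - t) * m * a ^ m
        = ((n:ℝ) - p) * g m + ((2*(n:ℝ) - p) - ((n:ℝ) - p) * m) * (g ((m:ℝ)+1) - g m) := by
      have c1 : ((m:ℝ)) * a ^ m = g m := hcast m
      have c2 : ((m:ℝ) + 1) * a ^ (m + 1) = g ((m:ℝ)+1) := by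
        have := hcast (m+1); push_cast at this; exact this
      rw [e3, ← c1, ← c2]; ring
    rw [key] at *
    linarith
  · -- upper bound
    have hz : (2:ℝ) < (p:ℝ) + 2 := by
      have : (1:ℝ) ≤ p := by exact_mod_cast hp1
      linarith
    have hptw : ∀ u ∈ R, (G.degree u : ℝ) * a ^ (G.degree u)
        ≤ g 2 + ((G.degree u : ℝ) - 2)/((p:ℝ) + 2 - 2) * (g ((p:ℝ)+2) - g 2) := by
      intro u hu
      rw [hcast]
      exact aux_secant_up hconv (by exact_mod_cast hdeg2 u hu)
        (by exact_mod_cast hdegub u hu) hz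
    have hsum1 : ∑ u ∈ R, (G.degree u : ℝ) * a ^ (G.degree u)
        ≤ ∑ u ∈ R, (g 2 + ((G.degree u : ℝ) - 2)/((p:ℝ) + 2 - 2) * (g ((p:ℝ)+2) - g 2)) :=
      Finset.sum_le_sum hptw
    have hsum2 : ∑ u ∈ R, (g 2 + ((G.degree u : ℝ) - 2)/((p:ℝ) + 2 - 2) * (g ((p:ℝ)+2) - g 2))
        = ((n:ℝ) - p) * g 2 + ((2*(n:ℝ) - p) - ((n:ℝ) - p) * 2)/((p:ℝ) + 2 - 2) * (g ((p:ℝ)+2) - g 2) := by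
      simp only [div_mul_eq_mul_div]
      rw [Finset.sum_add_distrib, Finset.sum_const, ← Finset.sum_div, ← Finset.sum_mul,
        Finset.sum_sub_distrib, Finset.sum_const, hsumRcast, nsmul_eq_mul, nsmul_eq_mul,
        hcardRcast]
    rw [hsplit]
    have hpne : ((p:ℝ)) ≠ 0 := by positivity
    have key : ((n:ℝ) - p) * g 2 + ((2*(n:ℝ) - p) - ((n:ℝ) - p) * 2)/((p:ℝ) + 2 - 2) * (g ((p:ℝ)+2) - g 2)
        = ((p : ℝ) + 2) * a ^ (p + 2) + 2 * ((n : ℝ) - p - 1) * a ^ 2 := by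
      have c1 : (2:ℝ) * a ^ 2 = g 2 := by
        have := hcast 2; push_cast at this; exact this
      have c2 : ((p:ℝ) + 2) * a ^ (p + 2) = g ((p:ℝ)+2) := by
        have := hcast (p+2); push_cast at this; exact this
      rw [← c1, ← c2]
      have hsimp : (2*(n:ℝ) - p) - ((n:ℝ) - p) * 2 = p := by ring
      rw [hsimp, add_sub_cancel_right]
      field_simp
      ring
    rw [hsum2, key] at hsum1
    linarith
end
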